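/- arXiv:1807.04252 — 7 statements merged into one kernel-verified Lean document; each statement's English description precedes it below -/
import Mathlib

section
/- If σ is a real number with |σ| ≤ 1/2 and σ ≠ 0, and λ ∈ ℂ satisfies λ = (1 + 2iσ ± √(1 - 4σ²))/2 (either sign), then |λ|² = (1 ± √(1-4σ²))/2 < 1. -/
theorem stmt_1 (σ : ℝ) (hσ : |σ| ≤ 1/2) (hσ0 : σ ≠ 0) (ε : ℝ) (hε : ε = 1 ∨ ε = -1)
    (lam : ℂ)
    (hlam : lam = (1 + 2 * σ * Complex.I + ε * Real.sqrt (1 - 4 * σ^2)) / 2) :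
    ‖lam‖ ^ 2 = (1 + ε * Real.sqrt (1 - 4 * σ^2)) / 2 ∧
    ‖lam‖ ^ 2 < 1 := by
  set s := Real.sqrt (1 - 4 * σ^2) with hs
  have h4 : 4 * σ^2 ≤ 1 := by
    have := abs_le.mp hσ
    nlinarith [this.1, this.2]
  have hs2 : s^2 = 1 - 4 * σ^2 := Real.sq_sqrt (by linarith)
  have hε2 : ε^2 = 1 := by rcases hε with h | h <;> simp [h]
  have hsnn : 0 ≤ s := Real.sqrt_nonneg _
  have hslt : s < 1 := by
    nlinarith [sq_pos_of_ne_zero hσ0]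
  have key : ‖lam‖ ^ 2 = (1 + ε * s) / 2 := by
    rw [Complex.sq_norm, hlam, Complex.normSq_apply]
    simp [Complex.div_re, Complex.div_im, Complex.normSq_apply]
    nlinarith [hs2, hε2]
  refine ⟨key, ?_⟩
  rw [key]
  rcases hε with h | h <;> rw [h] <;> nlinarith
end

section
/- Let λ ∈ ℂ with λ ≠ 1/2 and suppose λ(λ-1)/(2λ-1) = iσ for some nonzero real σ with |σ| ≤ 1/2. Then |λ| < 1. -/
theorem stmt_2 (lam : ℂ) (hlam : lam ≠ 1/2) (σ : ℝ) (hσ0 : σ ≠ 0) (hσ : |σ| ≤ 1/2)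
    (heq : lam * (lam - 1) / (2 * lam - 1) = σ * Complex.I) :
    ‖lam‖ < 1 := by
  have hden : (2 * lam - 1 : ℂ) ≠ 0 := by
    intro h
    apply hlam
    have : (2:ℂ) * lam = 1 := by linear_combination h
    field_simp
    linear_combination this
  have h2 : lam * (lam - 1) = (σ : ℂ) * Complex.I * (2 * lam - 1) := by
    field_simp at heq
    have hden' : lam * 2 - 1 ≠ 0 := by rw [mul_comm]; exact hden
    rw [div_eq_iff hden'] at heq
    linear_combination heq
  set s := Real.sqrt (1 - 4 * σ ^ 2) with hs
  have hσ2 : 4 * σ ^ 2 ≤ 1 := by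
    nlinarith [abs_nonneg σ, sq_abs σ]
  have hs0 : 0 ≤ s := Real.sqrt_nonneg _
  have hs2 : s ^ 2 = 1 - 4 * σ ^ 2 := Real.sq_sqrt (by linarith)
  have hs1 : s < 1 := by
    nlinarith [sq_pos_of_ne_zero hσ0, Real.sq_sqrt (by linarith : (0:ℝ) ≤ 1 - 4 * σ ^ 2)]
  have hsC : (s : ℂ) ^ 2 = 1 - 4 * (σ : ℂ) ^ 2 := by
    have := congrArg (Complex.ofReal) hs2
    push_cast at this
    exact this
  have hfact : (lam - (((1 + s) / 2 : ℝ) + (σ : ℝ) * Complex.I)) *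
      (lam - (((1 - s) / 2 : ℝ) + (σ : ℝ) * Complex.I)) = 0 := by
    push_cast
    linear_combination h2 - (1/4 : ℂ) * hsC + Complex.I_sq * (σ:ℂ)^2
  have habs : ‖lam‖ ^ 2 = lam.re ^ 2 + lam.im ^ 2 := by
    rw [Complex.sq_norm, Complex.normSq_apply]; ring
  rcases mul_eq_zero.mp hfact with h | h
  · have hl : lam = (((1 + s) / 2 : ℝ) + (σ : ℝ) * Complex.I) := by
      linear_combination h
    have hre : lam.re = (1 + s) / 2 := by rw [hl]; simp
    have him : lam.im = σ := by rw [hl]; simp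
    have : ‖lam‖ ^ 2 < 1 := by
      rw [habs, hre, him]; nlinarith
    nlinarith [norm_nonneg lam]
  · have hl : lam = (((1 - s) / 2 : ℝ) + (σ : ℝ) * Complex.I) := by
      linear_combination h
    have hre : lam.re = (1 - s) / 2 := by rw [hl]; simp
    have him : lam.im = σ := by rw [hl]; simp
    have : ‖lam‖ ^ 2 < 1 := by
      rw [habs, hre, him]; nlinarith
    nlinarith [norm_nonneg lam]
end

section
/- Let A be an n×m real matrix and suppose the min-max problem min_{y∈Δₘ} max_{x∈Δₙ} xᵀAy has a unique saddle point (x*, y*), with value v = x*ᵀAy*. Then for every i with x*ᵢ = 0 one has (Ay*)ᵢ < v, and for every j with y*ⱼ = 0 one has (Aᵀx*)ⱼ > v. -/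
open Matrix Finset


lemma cone_closed {E : Type*} [NormedAddCommGroup E] [NormedSpace ℝ E] [FiniteDimensional ℝ E]
    {ι : Type*} [Fintype ι] [DecidableEq ι] (w : ι → E) (s : Finset ι) :
    IsClosed {z : E | ∃ c : ι → ℝ, (∀ t, 0 ≤ c t) ∧ z = ∑ t ∈ s, c t • w t} := by
  induction s using Finset.strongInduction with
  | _ s ih =>
  by_cases hli : LinearIndependent ℝ (fun t : {x // x ∈ s} => w t)
  · -- linearly independent case
    set φ : ({x // x ∈ s} → ℝ) →ₗ[ℝ] E :=
      { toFun := fun c => ∑ t : {x // x ∈ s}, c t • w t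
        map_add' := by
          intro a b
          simp [add_smul, Finset.sum_add_distrib]
        map_smul' := by
          intro r a
          simp [smul_smul, Finset.smul_sum] } with hφ
    have hker : LinearMap.ker φ = ⊥ := by
      rw [LinearMap.ker_eq_bot']
      intro c hc
      have := Fintype.linearIndependent_iff.mp hli c hc
      funext t; exact this t
    have hce := LinearMap.isClosedEmbedding_of_injective hker
    have hset : {z : E | ∃ c : ι → ℝ, (∀ t, 0 ≤ c t) ∧ z = ∑ t ∈ s, c t • w t}
        = φ '' {c : {x // x ∈ s} → ℝ | ∀ t, 0 ≤ c t} := by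
      ext z
      constructor
      · rintro ⟨c, hc0, rfl⟩
        refine ⟨fun t => c t, fun t => hc0 t, ?_⟩
        show ∑ t : {x // x ∈ s}, c t • w t = _
        rw [Finset.sum_coe_sort s (fun t => c t • w t)]
      · rintro ⟨c, hc0, rfl⟩
        refine ⟨fun t => if h : t ∈ s then c ⟨t, h⟩ else 0, ?_, ?_⟩
        · intro t
          by_cases h : t ∈ s
          · simpa [h] using hc0 ⟨t, h⟩
          · simp [h]
        · show _ = ∑ t ∈ s, (if h : t ∈ s then c ⟨t, h⟩ else 0) • w t
          rw [← Finset.sum_coe_sort s (fun t => (if h : t ∈ s then c ⟨t, h⟩ else 0) • w t)]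
          apply Finset.sum_congr rfl
          intro t _
          simp [t.2]
    rw [hset]
    apply hce.isClosedMap
    have : {c : {x // x ∈ s} → ℝ | ∀ t, 0 ≤ c t} = ⋂ t, {c | 0 ≤ c t} :=
      Set.setOf_forall _
    rw [this]
    exact isClosed_iInter fun t => isClosed_le continuous_const (continuous_apply t)
  · -- dependent case
    obtain ⟨g, hgsum, t₀, hgt₀⟩ := Fintype.not_linearIndependent_iff.mp hli
    -- extend g to ι by 0
    set g' : ι → ℝ := fun t => if h : t ∈ s then g ⟨t, h⟩ else 0 with hg'
    have hg'sum : ∑ t ∈ s, g' t • w t = 0 := by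
      rw [← Finset.sum_coe_sort s (fun t => g' t • w t)]
      rw [← hgsum]
      apply Finset.sum_congr rfl
      intro t _
      simp [hg', t.2]
    have hg'off : ∀ t ∉ s, g' t = 0 := by intro t ht; simp [hg', ht]
    have hg't₀ : g' (t₀ : ι) ≠ 0 := by simpa [hg', t₀.2] using hgt₀
    -- WLOG some negative coefficient
    obtain ⟨h, hhsum, hhoff, thn, hthn_mem, hthn⟩ :
        ∃ h : ι → ℝ, ∑ t ∈ s, h t • w t = 0 ∧ (∀ t ∉ s, h t = 0) ∧
          ∃ t ∈ s, h t < 0 := by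
      rcases lt_or_gt_of_ne hg't₀ with hneg | hpos
      · exact ⟨g', hg'sum, hg'off, t₀, t₀.2, hneg⟩
      · refine ⟨-g', ?_, ?_, t₀, t₀.2, by simpa using hpos⟩
        · simp [neg_smul, Finset.sum_neg_distrib, hg'sum]
        · intro t ht; simp [hg'off t ht]
    -- set of negative indices
    set N : Finset ι := s.filter (fun t => h t < 0) with hN
    have hNne : N.Nonempty := ⟨thn, by simp [hN, hthn_mem, hthn]⟩
    have hNsub : ∀ t ∈ N, t ∈ s := fun t ht => (Finset.mem_filter.mp ht).1
    have hset : {z : E | ∃ c : ι → ℝ, (∀ t, 0 ≤ c t) ∧ z = ∑ t ∈ s, c t • w t}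
        = ⋃ t ∈ N, {z : E | ∃ c : ι → ℝ, (∀ u, 0 ≤ c u) ∧ z = ∑ u ∈ s.erase t, c u • w u} := by
      ext z
      simp only [Set.mem_iUnion, Set.mem_setOf_eq]
      constructor
      · rintro ⟨c, hc0, rfl⟩
        obtain ⟨tm, htmN, htmmin⟩ := N.exists_min_image (fun t => c t / (-h t)) hNne
        have htm_neg : h tm < 0 := (Finset.mem_filter.mp htmN).2
        set τ : ℝ := c tm / (-h tm) with hτ
        have hτ0 : 0 ≤ τ := div_nonneg (hc0 tm) (by linarith)
        set c' : ι → ℝ := fun u => c u + τ * h u with hc'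
        have hc'0 : ∀ u, 0 ≤ c' u := by
          intro u
          by_cases hu : h u < 0
          · have huN : u ∈ N := by
              refine Finset.mem_filter.mpr ⟨?_, hu⟩
              by_contra hus
              exact absurd (hhoff u hus) (ne_of_lt hu)
            have := htmmin u huN
            have h2 : τ * (-h u) ≤ c u := by
              rw [← le_div_iff₀ (by linarith : (0:ℝ) < -h u)]
              exact this
            simp only [hc']
            nlinarith
          · push_neg at hu
            exact add_nonneg (hc0 u) (mul_nonneg hτ0 hu)
        have hne : h tm ≠ 0 := ne_of_lt htm_neg
        have hc'tm : c' tm = 0 := by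
          show c tm + c tm / -h tm * h tm = 0
          rw [div_mul_eq_mul_div, mul_div_assoc, div_neg, div_self hne]
          ring
        have hc'sum : ∑ u ∈ s, c' u • w u = ∑ u ∈ s, c u • w u := by
          simp only [hc', add_smul, Finset.sum_add_distrib]
          have : ∑ u ∈ s, (τ * h u) • w u = τ • ∑ u ∈ s, h u • w u := by
            rw [Finset.smul_sum]
            apply Finset.sum_congr rfl
            intro u _
            rw [smul_smul]
          rw [this, hhsum, smul_zero, add_zero]
        refine ⟨tm, htmN, c', hc'0, ?_⟩
        calc ∑ u ∈ s, c u • w u = ∑ u ∈ s, c' u • w u := hc'sum.symm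
          _ = ∑ u ∈ s.erase tm, c' u • w u + c' tm • w tm :=
              (Finset.sum_erase_add _ _ (hNsub tm htmN)).symm
          _ = ∑ u ∈ s.erase tm, c' u • w u := by rw [hc'tm, zero_smul, add_zero]
      · rintro ⟨t, htN, c, hc0, rfl⟩
        refine ⟨Function.update c t 0, ?_, ?_⟩
        · intro u
          rcases eq_or_ne u t with rfl | hu
          · simp
          · simp [Function.update_of_ne hu, hc0 u]
        · symm
          calc ∑ u ∈ s, Function.update c t 0 u • w u
              = ∑ u ∈ s.erase t, Function.update c t 0 u • w u
                  + Function.update c t 0 t • w t :=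
                (Finset.sum_erase_add _ _ (hNsub t htN)).symm
            _ = ∑ u ∈ s.erase t, c u • w u := by
                rw [Function.update_self, zero_smul, add_zero]
                apply Finset.sum_congr rfl
                intro u hu
                rw [Function.update_of_ne (Finset.ne_of_mem_erase hu)]
    rw [hset]
    apply Set.Finite.isClosed_biUnion (N.finite_toSet)
    intro t ht
    exact ih (s.erase t) (Finset.erase_ssubset (hNsub t ht))


lemma farkas_aux {d : ℕ} {ι : Type*} [Fintype ι] [DecidableEq ι]
    (w : ι → (Fin d → ℝ)) (b : Fin d → ℝ) :
    (∃ c : ι → ℝ, (∀ t, 0 ≤ c t) ∧ b = ∑ t, c t • w t) ∨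
    (∃ x : Fin d → ℝ, (∀ t, 0 ≤ ∑ k, w t k * x k) ∧ ∑ k, b k * x k < 0) := by
  classical
  set C : Set (Fin d → ℝ) :=
    {z | ∃ c : ι → ℝ, (∀ t, 0 ≤ c t) ∧ z = ∑ t ∈ Finset.univ, c t • w t} with hC
  by_cases hb : b ∈ C
  · left
    obtain ⟨c, hc0, hcb⟩ := hb
    exact ⟨c, hc0, hcb⟩
  · right
    have hconv : Convex ℝ C := by
      rintro z₁ ⟨c₁, hc₁, rfl⟩ z₂ ⟨c₂, hc₂, rfl⟩ a b' ha hb' hab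
      refine ⟨fun t => a * c₁ t + b' * c₂ t,
        fun t => add_nonneg (mul_nonneg ha (hc₁ t)) (mul_nonneg hb' (hc₂ t)), ?_⟩
      rw [Finset.smul_sum, Finset.smul_sum, ← Finset.sum_add_distrib]
      apply Finset.sum_congr rfl
      intro t _
      simp [add_smul, smul_smul]
    have hclosed : IsClosed C := cone_closed w Finset.univ
    obtain ⟨f, u, hfb, hfC⟩ := geometric_hahn_banach_point_closed hconv hclosed hb
    have h0C : (0 : Fin d → ℝ) ∈ C := ⟨0, fun t => le_rfl, by simp⟩
    have hu0 : u < 0 := by have := hfC 0 h0C; simpa using this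
    have hwC : ∀ (t : ι) (M : ℝ), 0 ≤ M → M • w t ∈ C := by
      intro t M hM
      refine ⟨fun u' => if u' = t then M else 0, fun u' => by positivity, ?_⟩
      simp [ite_smul]
    have hfw : ∀ t, 0 ≤ f (w t) := by
      intro t
      by_contra hneg
      push_neg at hneg
      set M : ℝ := (u - 1) / f (w t) with hM
      have hM0 : 0 ≤ M := le_of_lt (div_pos_of_neg_of_neg (by linarith) hneg)
      have := hfC (M • w t) (hwC t M hM0)
      rw [_root_.map_smul] at this
      have hMf : M * f (w t) = u - 1 := div_mul_cancel₀ _ (ne_of_lt hneg)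
      simp only [smul_eq_mul] at this
      linarith
    set x : Fin d → ℝ := fun k => f (Pi.single k 1) with hx
    have key : ∀ z : Fin d → ℝ, f z = ∑ k, z k * x k := by
      intro z
      have hz : z = ∑ k, z k • (Pi.single k 1 : Fin d → ℝ) := by
        ext l
        rw [Finset.sum_apply]
        simp [Pi.single_apply]
      calc f z = f (∑ k, z k • (Pi.single k 1 : Fin d → ℝ)) := by rw [← hz]
        _ = ∑ k, z k * x k := by
            rw [_root_.map_sum]
            apply Finset.sum_congr rfl
            intro k _
            rw [_root_.map_smul]
            simp [hx]
    refine ⟨x, fun t => ?_, ?_⟩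
    · rw [← key (w t)]
      exact hfw t
    · rw [← key b]
      linarith


lemma key_lemma {n m : ℕ} (A : Fin n → Fin m → ℝ) (xs : Fin n → ℝ) (ys : Fin m → ℝ) (v : ℝ)
    (huniqx : ∀ x : Fin n → ℝ, (∀ k, 0 ≤ x k) → ∑ k, x k = 1 →
      (∀ j, v ≤ ∑ k, A k j * x k) → x = xs)
    (huniqy : ∀ y : Fin m → ℝ, (∀ j, 0 ≤ y j) → ∑ j, y j = 1 →
      (∀ k, ∑ j, A k j * y j ≤ v) → y = ys)
    (i : Fin n) (hxi : xs i = 0) : ∑ j, A i j * ys j < v := by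
  classical
  set w : (Fin n ⊕ Fin m) → (Fin n → ℝ) :=
    Sum.elim (fun k => (Pi.single k 1 : Fin n → ℝ)) (fun j => fun k => A k j - v) with hw
  set b : Fin n → ℝ := -(Pi.single i 1 : Fin n → ℝ) with hb
  rcases farkas_aux w b with ⟨c, hc0, hcb⟩ | ⟨x, hx0, hxb⟩
  · -- b is in the cone: produce optimal y with strict slack in row i
    set β : Fin m → ℝ := fun j => c (Sum.inr j) with hβ
    have hβ0 : ∀ j, 0 ≤ β j := fun j => hc0 _
    have hk : ∀ k : Fin n, c (Sum.inl k) + ∑ j, β j * (A k j - v)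
        = -(if k = i then (1:ℝ) else 0) := by
      intro k
      have := congrFun hcb k
      rw [Finset.sum_apply] at this
      rw [Fintype.sum_sum_type] at this
      simp only [Sum.elim_inl, Sum.elim_inr, Pi.smul_apply, smul_eq_mul] at this
      simp only [hw, hb, Sum.elim_inl, Sum.elim_inr, Pi.single_apply, Pi.neg_apply,
        mul_ite, mul_one, mul_zero, Finset.sum_ite_eq, Finset.mem_univ, if_true] at this
      simp only [hβ]
      linarith
    set S : ℝ := ∑ j, β j with hS
    have hS0 : 0 ≤ S := Finset.sum_nonneg fun j _ => hβ0 j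
    have hSpos : 0 < S := by
      rcases lt_or_eq_of_le hS0 with h | h
      · exact h
      · exfalso
        have hβz : ∀ j ∈ Finset.univ, β j = 0 :=
          (Finset.sum_eq_zero_iff_of_nonneg (fun j _ => hβ0 j)).mp h.symm
        have hki := hk i
        rw [if_pos rfl] at hki
        have : ∑ j, β j * (A i j - v) = 0 :=
          Finset.sum_eq_zero fun j hj => by rw [hβz j hj, zero_mul]
        have hci := hc0 (Sum.inl i)
        rw [this] at hki
        linarith
    -- the normalized y
    set yh : Fin m → ℝ := fun j => β j / S with hyh
    have hyh0 : ∀ j, 0 ≤ yh j := fun j => div_nonneg (hβ0 j) hS0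
    have hyh1 : ∑ j, yh j = 1 := by
      rw [hyh]
      rw [← Finset.sum_div]
      exact div_self (ne_of_gt hSpos)
    have hrowle : ∀ k, ∑ j, β j * A k j ≤ v * S - (if k = i then 1 else 0) := by
      intro k
      have hkk := hk k
      have hexp : ∑ j, β j * (A k j - v) = (∑ j, β j * A k j) - v * S := by
        rw [hS, Finset.mul_sum, ← Finset.sum_sub_distrib]
        apply Finset.sum_congr rfl
        intro j _
        ring
      rw [hexp] at hkk
      have := hc0 (Sum.inl k)
      linarith
    have hsumAy : ∀ k, ∑ j, A k j * yh j = (∑ j, β j * A k j) / S := by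
      intro k
      rw [Finset.sum_div]
      apply Finset.sum_congr rfl
      intro j _
      rw [hyh]
      ring
    have hykle : ∀ k, ∑ j, A k j * yh j ≤ v := by
      intro k
      rw [hsumAy k, div_le_iff₀ hSpos]
      have := hrowle k
      have hite : (0:ℝ) ≤ (if k = i then 1 else 0) := by positivity
      linarith
    have hyeq : yh = ys := huniqy yh hyh0 hyh1 hykle
    rw [← hyeq]
    rw [hsumAy i, div_lt_iff₀ hSpos]
    have := hrowle i
    rw [if_pos rfl] at this
    linarith
  · -- separating x: produce optimal x with x i > 0, contradiction
    have hxk : ∀ k, 0 ≤ x k := by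
      intro k
      have := hx0 (Sum.inl k)
      simpa [hw, Pi.single_apply, Finset.sum_ite_eq, mul_ite] using this
    have hxi' : 0 < x i := by
      have := hxb
      simp only [hb, Pi.neg_apply, Pi.single_apply] at this
      have heq : ∑ k, (-(if k = i then (1:ℝ) else 0)) * x k = -x i := by
        simp [neg_mul, ite_mul, Finset.sum_ite_eq']
      rw [heq] at this
      linarith
    set T : ℝ := ∑ k, x k with hT
    have hTpos : 0 < T := by
      have hle : x i ≤ T := Finset.single_le_sum (fun k _ => hxk k) (Finset.mem_univ i)
      linarith
    set xh : Fin n → ℝ := fun k => x k / T with hxh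
    have hxh0 : ∀ k, 0 ≤ xh k := fun k => div_nonneg (hxk k) (le_of_lt hTpos)
    have hxh1 : ∑ k, xh k = 1 := by
      rw [hxh, ← Finset.sum_div]
      exact div_self (ne_of_gt hTpos)
    have hcolge : ∀ j, v ≤ ∑ k, A k j * xh k := by
      intro j
      have h1 := hx0 (Sum.inr j)
      simp only [hw, Sum.elim_inr] at h1
      have hexp : ∑ k, (A k j - v) * x k = (∑ k, A k j * x k) - v * T := by
        rw [hT, Finset.mul_sum, ← Finset.sum_sub_distrib]
        apply Finset.sum_congr rfl
        intro k _
        ring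
      rw [hexp] at h1
      have hsum : ∑ k, A k j * xh k = (∑ k, A k j * x k) / T := by
        rw [Finset.sum_div]
        apply Finset.sum_congr rfl
        intro k _
        rw [hxh]
        ring
      rw [hsum, le_div_iff₀ hTpos]
      linarith
    have hxeq : xh = xs := huniqx xh hxh0 hxh1 hcolge
    exfalso
    have : xh i = 0 := by rw [hxeq]; exact hxi
    rw [hxh] at this
    have := div_pos hxi' hTpos
    simp only [hxh] at *
    linarith


lemma avg_le {ι : Type*} [Fintype ι] (x a : ι → ℝ) (v : ℝ) (hx0 : ∀ k, 0 ≤ x k)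
    (hx1 : ∑ k, x k = 1) (ha : ∀ k, a k ≤ v) : ∑ k, x k * a k ≤ v := by
  calc ∑ k, x k * a k ≤ ∑ k, x k * v :=
        Finset.sum_le_sum fun k _ => mul_le_mul_of_nonneg_left (ha k) (hx0 k)
    _ = v := by rw [← Finset.sum_mul, hx1, one_mul]

lemma avg_ge {ι : Type*} [Fintype ι] (x a : ι → ℝ) (v : ℝ) (hx0 : ∀ k, 0 ≤ x k)
    (hx1 : ∑ k, x k = 1) (ha : ∀ k, v ≤ a k) : v ≤ ∑ k, x k * a k := by
  calc v = ∑ k, x k * v := by rw [← Finset.sum_mul, hx1, one_mul]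
    _ ≤ ∑ k, x k * a k :=
        Finset.sum_le_sum fun k _ => mul_le_mul_of_nonneg_left (ha k) (hx0 k)

theorem stmt_7 (n m : ℕ) (A : Matrix (Fin n) (Fin m) ℝ)
    (xs : Fin n → ℝ) (ys : Fin m → ℝ)
    (hxs : (∀ i, 0 ≤ xs i) ∧ ∑ i, xs i = 1) (hys : (∀ j, 0 ≤ ys j) ∧ ∑ j, ys j = 1)
    (hsaddle : ∀ x : Fin n → ℝ, (∀ i, 0 ≤ x i) → ∑ i, x i = 1 →
        ∀ y : Fin m → ℝ, (∀ j, 0 ≤ y j) → ∑ j, y j = 1 →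
        x ⬝ᵥ A.mulVec ys ≤ xs ⬝ᵥ A.mulVec ys ∧ xs ⬝ᵥ A.mulVec ys ≤ xs ⬝ᵥ A.mulVec y)
    (huniq : ∀ x : Fin n → ℝ, (∀ i, 0 ≤ x i) → ∑ i, x i = 1 →
        ∀ y : Fin m → ℝ, (∀ j, 0 ≤ y j) → ∑ j, y j = 1 →
        (∀ x' : Fin n → ℝ, (∀ i, 0 ≤ x' i) → ∑ i, x' i = 1 →
         ∀ y' : Fin m → ℝ, (∀ j, 0 ≤ y' j) → ∑ j, y' j = 1 →
         x' ⬝ᵥ A.mulVec y ≤ x ⬝ᵥ A.mulVec y ∧ x ⬝ᵥ A.mulVec y ≤ x ⬝ᵥ A.mulVec y') →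
        x = xs ∧ y = ys) :
    (∀ i, xs i = 0 → A.mulVec ys i < xs ⬝ᵥ A.mulVec ys) ∧
    (∀ j, ys j = 0 → xs ⬝ᵥ A.mulVec ys < A.transpose.mulVec xs j) := by
  classical
  set v : ℝ := xs ⬝ᵥ A.mulVec ys with hv
  -- basic sum forms
  have rowform : ∀ (x : Fin n → ℝ) (y : Fin m → ℝ),
      x ⬝ᵥ A.mulVec y = ∑ k, x k * ∑ j, A k j * y j := by
    intro x y
    simp [dotProduct, Matrix.mulVec]
  have colform : ∀ (x : Fin n → ℝ) (y : Fin m → ℝ),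
      x ⬝ᵥ A.mulVec y = ∑ j, y j * ∑ k, A k j * x k := by
    intro x y
    rw [rowform]
    simp only [Finset.mul_sum]
    rw [Finset.sum_comm]
    apply Finset.sum_congr rfl
    intro j _
    apply Finset.sum_congr rfl
    intro k _
    ring
  -- single is in the simplex
  have hsingle : ∀ (d : ℕ) (k : Fin d),
      (∀ l, 0 ≤ (Pi.single k 1 : Fin d → ℝ) l) ∧ ∑ l, (Pi.single k 1 : Fin d → ℝ) l = 1 := by
    intro d k
    constructor
    · intro l
      rcases eq_or_ne l k with rfl | h
      · simp
      · simp [Pi.single_apply, h]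
    · simp [Finset.sum_pi_single']
  -- row and column bounds
  have h1 : ∀ k, ∑ j, A k j * ys j ≤ v := by
    intro k
    have := (hsaddle (Pi.single k 1) (hsingle n k).1 (hsingle n k).2 ys hys.1 hys.2).1
    rw [rowform] at this
    simpa [Pi.single_apply, ite_mul, Finset.sum_ite_eq] using this
  have h2 : ∀ j, v ≤ ∑ k, A k j * xs k := by
    intro j
    have := (hsaddle xs hxs.1 hxs.2 (Pi.single j 1) (hsingle m j).1 (hsingle m j).2).2
    rw [colform] at this
    simpa [Pi.single_apply, ite_mul, Finset.sum_ite_eq] using this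
  -- uniqueness transported
  have huniqX : ∀ x : Fin n → ℝ, (∀ k, 0 ≤ x k) → ∑ k, x k = 1 →
      (∀ j, v ≤ ∑ k, A k j * x k) → x = xs := by
    intro x hx0 hx1 hcol
    have hvx : x ⬝ᵥ A.mulVec ys = v := by
      apply le_antisymm
      · rw [rowform]; exact avg_le _ _ _ hx0 hx1 h1
      · rw [colform]; exact avg_ge _ _ _ hys.1 hys.2 hcol
    refine (huniq x hx0 hx1 ys hys.1 hys.2 ?_).1
    intro x' hx'0 hx'1 y' hy'0 hy'1
    constructor
    · rw [hvx, rowform]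
      exact avg_le _ _ _ hx'0 hx'1 h1
    · rw [hvx, colform]
      exact avg_ge _ _ _ hy'0 hy'1 hcol
  have huniqY : ∀ y : Fin m → ℝ, (∀ j, 0 ≤ y j) → ∑ j, y j = 1 →
      (∀ k, ∑ j, A k j * y j ≤ v) → y = ys := by
    intro y hy0 hy1 hrow
    have hvy : xs ⬝ᵥ A.mulVec y = v := by
      apply le_antisymm
      · rw [rowform]; exact avg_le _ _ _ hxs.1 hxs.2 hrow
      · rw [colform]; exact avg_ge _ _ _ hy0 hy1 h2
    refine (huniq xs hxs.1 hxs.2 y hy0 hy1 ?_).2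
    intro x' hx'0 hx'1 y' hy'0 hy'1
    constructor
    · rw [hvy, rowform]
      exact avg_le _ _ _ hx'0 hx'1 hrow
    · rw [hvy, colform]
      exact avg_ge _ _ _ hy'0 hy'1 h2
  constructor
  · intro i hi
    have := key_lemma (fun k j => A k j) xs ys v huniqX huniqY i hi
    calc A.mulVec ys i = ∑ j, A i j * ys j := by simp [Matrix.mulVec, dotProduct]
      _ < v := this
  · intro j hj
    have hX : ∀ x : Fin m → ℝ, (∀ k, 0 ≤ x k) → ∑ k, x k = 1 →
        (∀ k : Fin n, -v ≤ ∑ l : Fin m, (fun (a : Fin m) (b : Fin n) => -(A b a)) l k * x l) →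
        x = ys := by
      intro x hx0 hx1 hcond
      apply huniqY x hx0 hx1
      intro k
      have hc := hcond k
      have hneg : ∑ l : Fin m, (fun (a : Fin m) (b : Fin n) => -(A b a)) l k * x l
          = -(∑ l, A k l * x l) := by
        simp [neg_mul]
      rw [hneg] at hc
      linarith
    have hY : ∀ y : Fin n → ℝ, (∀ k, 0 ≤ y k) → ∑ k, y k = 1 →
        (∀ k : Fin m, ∑ l : Fin n, (fun (a : Fin m) (b : Fin n) => -(A b a)) k l * y l ≤ -v) →
        y = xs := by
      intro y hy0 hy1 hcond
      apply huniqX y hy0 hy1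
      intro k
      have hc := hcond k
      have hneg : ∑ l : Fin n, (fun (a : Fin m) (b : Fin n) => -(A b a)) k l * y l
          = -(∑ l, A l k * y l) := by
        simp [neg_mul]
      rw [hneg] at hc
      linarith
    have := key_lemma (fun (a : Fin m) (b : Fin n) => -(A b a)) ys xs (-v) hX hY j hj
    have heq : ∑ l : Fin n, (fun (a : Fin m) (b : Fin n) => -(A b a)) j l * xs l
        = -(∑ l, A l j * xs l) := by
      simp [neg_mul]
    rw [heq] at this
    have hlt : v < ∑ l, A l j * xs l := by linarith
    calc v < ∑ l, A l j * xs l := hlt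
      _ = A.transpose.mulVec xs j := by
          simp [Matrix.mulVec, dotProduct, Matrix.transpose_apply]
end

section
/- Let x ∈ Δₙ be strictly positive, c ∈ ℝⁿ with |cᵢ| ≤ η for all i and some 0 < η < 1/2. Define x'ᵢ = xᵢ e^{cᵢ}/∑ⱼ xⱼe^{cⱼ} and x''ᵢ = xᵢ(1+cᵢ)/∑ⱼ xⱼ(1+cⱼ). Then ‖x' - x‖₁ ≤ C·η and ‖x'' - x‖₁ ≤ C·η and ‖x' - x''‖₁ ≤ C·η² for some absolute constant C. -/
theorem stmt_12 : ∃ C : ℝ, 0 < C ∧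
    ∀ (n : ℕ) (x c : Fin n → ℝ) (η : ℝ), 0 < η → η < 1/2 →
    (∀ i, 0 < x i) → (∑ i, x i = 1) → (∀ i, |c i| ≤ η) →
    ∀ (x' x'' : Fin n → ℝ),
    (∀ i, x' i = x i * Real.exp (c i) / ∑ j, x j * Real.exp (c j)) →
    (∀ i, x'' i = x i * (1 + c i) / ∑ j, x j * (1 + c j)) →
    (∑ i, |x' i - x i|) ≤ C * η ∧ (∑ i, |x'' i - x i|) ≤ C * η ∧
    (∑ i, |x' i - x'' i|) ≤ C * η ^ 2 := by
  refine ⟨100, by norm_num, ?_⟩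
  intro n x c η hη hη2 hx hsum hc x' x'' hx' hx''
  set S : ℝ := ∑ j, x j * Real.exp (c j) with hS
  set T : ℝ := ∑ j, x j * (1 + c j) with hT
  have hη1 : η ≤ 1 := by linarith
  have hci1 : ∀ i, |c i| ≤ 1 := fun i => le_trans (hc i) hη1
  have he1 : ∀ i, |Real.exp (c i) - 1| ≤ 2 * η := fun i =>
    le_trans (Real.abs_exp_sub_one_le (hci1 i)) (by linarith [hc i])
  have he2 : ∀ i, |Real.exp (c i) - 1 - c i| ≤ η ^ 2 := fun i => by
    refine le_trans (Real.abs_exp_sub_one_sub_id_le (hci1 i)) ?_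
    have := hc i
    have := abs_nonneg (c i)
    nlinarith [sq_abs (c i)]
  -- S ≥ 1/2
  have hSlb : (1:ℝ)/2 ≤ S := by
    have : ∀ j, x j * (1/2) ≤ x j * Real.exp (c j) := by
      intro j
      have h1 : -η ≤ c j := (abs_le.1 (hc j)).1
      have : (1:ℝ)/2 ≤ Real.exp (c j) := by
        have h2 := Real.add_one_le_exp (c j)
        linarith
      nlinarith [(hx j).le]
    calc (1:ℝ)/2 = ∑ j, x j * (1/2) := by rw [← Finset.sum_mul, hsum]; ring
    _ ≤ S := Finset.sum_le_sum fun j _ => this j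
  have hSpos : 0 < S := by linarith
  -- |S - 1| ≤ 2η
  have hS1 : |S - 1| ≤ 2 * η := by
    have : S - 1 = ∑ j, x j * (Real.exp (c j) - 1) := by
      calc S - 1 = (∑ j, x j * Real.exp (c j)) - ∑ j, x j := by rw [hS, hsum]
        _ = ∑ j, (x j * Real.exp (c j) - x j) := by rw [Finset.sum_sub_distrib]
        _ = ∑ j, x j * (Real.exp (c j) - 1) := Finset.sum_congr rfl fun j _ => by ring
    rw [this]
    calc |∑ j, x j * (Real.exp (c j) - 1)| ≤ ∑ j, |x j * (Real.exp (c j) - 1)| :=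
          Finset.abs_sum_le_sum_abs _ _
      _ ≤ ∑ j, x j * (2 * η) := Finset.sum_le_sum fun j _ => by
          rw [abs_mul, abs_of_pos (hx j)]
          exact mul_le_mul_of_nonneg_left (he1 j) (hx j).le
      _ = 2 * η := by rw [← Finset.sum_mul, hsum]; ring
  -- T bounds
  have hT1 : |T - 1| ≤ η := by
    have : T - 1 = ∑ j, x j * c j := by
      calc T - 1 = (∑ j, x j * (1 + c j)) - ∑ j, x j := by rw [hT, hsum]
        _ = ∑ j, (x j * (1 + c j) - x j) := by rw [Finset.sum_sub_distrib]
        _ = ∑ j, x j * c j := Finset.sum_congr rfl fun j _ => by ring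
    rw [this]
    calc |∑ j, x j * c j| ≤ ∑ j, |x j * c j| := Finset.abs_sum_le_sum_abs _ _
      _ ≤ ∑ j, x j * η := Finset.sum_le_sum fun j _ => by
          rw [abs_mul, abs_of_pos (hx j)]
          exact mul_le_mul_of_nonneg_left (hc j) (hx j).le
      _ = η := by rw [← Finset.sum_mul, hsum]; ring
  have hTlb : (1:ℝ)/2 ≤ T := by have := abs_le.1 hT1; linarith [this.1]
  have hTub : T ≤ 3/2 := by have := abs_le.1 hT1; linarith [this.2]
  have hTpos : 0 < T := by linarith
  -- |T - S| ≤ η²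
  have hTS : |T - S| ≤ η ^ 2 := by
    have : T - S = ∑ j, x j * (1 + c j - Real.exp (c j)) := by
      calc T - S = ∑ j, (x j * (1 + c j) - x j * Real.exp (c j)) := by
            rw [hT, hS, Finset.sum_sub_distrib]
        _ = ∑ j, x j * (1 + c j - Real.exp (c j)) := Finset.sum_congr rfl fun j _ => by ring
    rw [this]
    calc |∑ j, x j * (1 + c j - Real.exp (c j))| ≤ ∑ j, |x j * (1 + c j - Real.exp (c j))| :=
          Finset.abs_sum_le_sum_abs _ _
      _ ≤ ∑ j, x j * η ^ 2 := Finset.sum_le_sum fun j _ => by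
          rw [abs_mul, abs_of_pos (hx j)]
          refine mul_le_mul_of_nonneg_left ?_ (hx j).le
          have := he2 j
          rw [show (1 + c j - Real.exp (c j)) = -(Real.exp (c j) - 1 - c j) by ring, abs_neg]
          exact this
      _ = η ^ 2 := by rw [← Finset.sum_mul, hsum]; ring
  refine ⟨?_, ?_, ?_⟩
  · -- first bound
    calc ∑ i, |x' i - x i| ≤ ∑ i, x i * (8 * η) := by
          refine Finset.sum_le_sum fun i _ => ?_
          rw [hx' i]
          have h1 : x i * Real.exp (c i) / S - x i = x i * (Real.exp (c i) - S) / S := by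
            field_simp
          rw [h1, abs_div, abs_of_pos hSpos, abs_mul, abs_of_pos (hx i)]
          rw [div_le_iff₀ hSpos]
          have h2 : |Real.exp (c i) - S| ≤ 4 * η := by
            calc |Real.exp (c i) - S| = |(Real.exp (c i) - 1) + (1 - S)| := by ring_nf
              _ ≤ |Real.exp (c i) - 1| + |1 - S| := abs_add_le _ _
              _ ≤ 2 * η + 2 * η := by
                  refine add_le_add (he1 i) ?_
                  rw [abs_sub_comm]; exact hS1
              _ = 4 * η := by ring
          calc x i * |Real.exp (c i) - S| ≤ x i * (4 * η) :=
                mul_le_mul_of_nonneg_left h2 (hx i).le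
            _ ≤ x i * (8 * η) * S := by
                nlinarith [mul_nonneg (mul_nonneg (hx i).le (by linarith : (0:ℝ) ≤ 8 * η))
                  (by linarith : (0:ℝ) ≤ S - 1/2)]
      _ = 8 * η := by rw [← Finset.sum_mul, hsum]; ring
      _ ≤ 100 * η := by nlinarith
  · calc ∑ i, |x'' i - x i| ≤ ∑ i, x i * (4 * η) := by
          refine Finset.sum_le_sum fun i _ => ?_
          rw [hx'' i]
          have h1 : x i * (1 + c i) / T - x i = x i * ((1 + c i) - T) / T := by
            field_simp
          rw [h1, abs_div, abs_of_pos hTpos, abs_mul, abs_of_pos (hx i)]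
          rw [div_le_iff₀ hTpos]
          have h2 : |(1 + c i) - T| ≤ 2 * η := by
            calc |(1 + c i) - T| = |c i + (1 - T)| := by ring_nf
              _ ≤ |c i| + |1 - T| := abs_add_le _ _
              _ ≤ η + η := by
                  refine add_le_add (hc i) ?_
                  rw [abs_sub_comm]; exact hT1
              _ = 2 * η := by ring
          calc x i * |1 + c i - T| ≤ x i * (2 * η) :=
                mul_le_mul_of_nonneg_left h2 (hx i).le
            _ ≤ x i * (4 * η) * T := by
                nlinarith [mul_nonneg (mul_nonneg (hx i).le (by linarith : (0:ℝ) ≤ 4 * η))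
                  (by linarith : (0:ℝ) ≤ T - 1/2)]
      _ = 4 * η := by rw [← Finset.sum_mul, hsum]; ring
      _ ≤ 100 * η := by nlinarith
  · calc ∑ i, |x' i - x'' i| ≤ ∑ i, x i * (12 * η ^ 2) := by
          refine Finset.sum_le_sum fun i _ => ?_
          rw [hx' i, hx'' i]
          have h1 : x i * Real.exp (c i) / S - x i * (1 + c i) / T
              = x i * (Real.exp (c i) * T - (1 + c i) * S) / (S * T) := by
            field_simp
          rw [h1, abs_div, abs_of_pos (mul_pos hSpos hTpos), abs_mul, abs_of_pos (hx i)]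
          rw [div_le_iff₀ (mul_pos hSpos hTpos)]
          have hnum : |Real.exp (c i) * T - (1 + c i) * S| ≤ 3 * η ^ 2 := by
            have key : Real.exp (c i) * T - (1 + c i) * S
                = T * (Real.exp (c i) - 1 - c i) + (1 + c i) * (T - S) := by ring
            rw [key]
            calc |T * (Real.exp (c i) - 1 - c i) + (1 + c i) * (T - S)|
                ≤ |T * (Real.exp (c i) - 1 - c i)| + |(1 + c i) * (T - S)| := abs_add_le _ _
              _ = |T| * |Real.exp (c i) - 1 - c i| + |1 + c i| * |T - S| := by
                  rw [abs_mul, abs_mul]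
              _ ≤ (3/2) * η ^ 2 + (3/2) * η ^ 2 := by
                  refine add_le_add ?_ ?_
                  · refine mul_le_mul ?_ (he2 i) (abs_nonneg _) (by norm_num)
                    rw [abs_of_pos hTpos]; exact hTub
                  · refine mul_le_mul ?_ hTS (abs_nonneg _) (by norm_num)
                    have h3 := abs_le.1 (hc i)
                    rw [abs_le]; constructor <;> [linarith [h3.1]; linarith [h3.2]]
              _ = 3 * η ^ 2 := by ring
          have hST : (1:ℝ)/4 ≤ S * T := by nlinarith
          calc x i * |Real.exp (c i) * T - (1 + c i) * S| ≤ x i * (3 * η ^ 2) :=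
                mul_le_mul_of_nonneg_left hnum (hx i).le
            _ ≤ x i * (12 * η ^ 2) * (S * T) := by
                nlinarith [mul_nonneg (mul_nonneg (hx i).le
                  (by positivity : (0:ℝ) ≤ 12 * η ^ 2)) (by linarith : (0:ℝ) ≤ S * T - 1/4)]
      _ = 12 * η ^ 2 := by rw [← Finset.sum_mul, hsum]; ring
      _ ≤ 100 * η ^ 2 := by nlinarith [sq_nonneg η]
end

section
/- Let B be a k₁×k₂ real matrix, Dₓ a k₁×k₁ diagonal matrix with positive diagonal, D_y a k₂×k₂ diagonal matrix with positive diagonal, and η > 0. Then every eigenvalue of the block matrix J_small = [[0, ηDₓB],[-ηD_yBᵀ, 0]] is purely imaginary. -/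
open Matrix

theorem stmt_14 (k₁ k₂ : ℕ) (B : Matrix (Fin k₁) (Fin k₂) ℝ)
    (dx : Fin k₁ → ℝ) (hdx : ∀ i, 0 < dx i)
    (dy : Fin k₂ → ℝ) (hdy : ∀ j, 0 < dy j)
    (η : ℝ) (hη : 0 < η)
    (Jsmall : Matrix (Fin k₁ ⊕ Fin k₂) (Fin k₁ ⊕ Fin k₂) ℝ)
    (hJ : Jsmall = Matrix.fromBlocks 0 (η • (Matrix.diagonal dx * B))
        (-(η • (Matrix.diagonal dy * B.transpose))) 0)
    (lam : ℂ) (v : Fin k₁ ⊕ Fin k₂ → ℂ) (hv : v ≠ 0)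
    (heig : (Jsmall.map Complex.ofReal).mulVec v = lam • v) :
    lam.re = 0 := by
  set d : Fin k₁ ⊕ Fin k₂ → ℝ := Sum.elim dx dy with hd_def
  have hd : ∀ i, 0 < d i := by rintro (i | j); exacts [hdx i, hdy j]
  set S : Matrix (Fin k₁ ⊕ Fin k₂) (Fin k₁ ⊕ Fin k₂) ℝ :=
    η • Matrix.fromBlocks 0 B (-B.transpose) 0 with hS_def
  have hskew : ∀ i j, S j i = -S i j := by
    rintro (i | i) (j | j) <;> simp [hS_def]
  have hJE : ∀ i j, Jsmall i j = d i * S i j := by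
    rw [hJ]
    rintro (i | i) (j | j) <;>
      simp [hS_def, hd_def, Matrix.diagonal_mul] <;> ring
  set w : (Fin k₁ ⊕ Fin k₂) → ℂ := (S.map Complex.ofReal).mulVec v with hw_def
  have hw : ∀ i, w i = ∑ j, ((S i j : ℝ) : ℂ) * v j := by
    intro i; simp [hw_def, Matrix.mulVec, Matrix.map_apply, dotProduct]
  have hkey : ∀ i, w i = lam * v i * ((d i : ℝ) : ℂ)⁻¹ := by
    intro i
    have h1 : (Jsmall.map Complex.ofReal).mulVec v i = lam * v i := by
      rw [heig]; simp
    have h2 : (Jsmall.map Complex.ofReal).mulVec v i = (d i : ℂ) * w i := by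
      simp only [Matrix.mulVec, dotProduct, Matrix.map_apply, hw i, Finset.mul_sum]
      refine Finset.sum_congr rfl fun j _ => ?_
      rw [hJE i j]; push_cast; ring
    have hdne : ((d i : ℝ) : ℂ) ≠ 0 := by exact_mod_cast (hd i).ne'
    rw [eq_mul_inv_iff_mul_eq₀ hdne, mul_comm, ← h2, h1]
  set c : ℝ := ∑ i, (d i)⁻¹ * Complex.normSq (v i) with hc_def
  have hc_pos : 0 < c := by
    obtain ⟨i0, hi0⟩ := Function.ne_iff.mp hv
    have hi0' : v i0 ≠ 0 := by simpa using hi0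
    refine Finset.sum_pos' (fun i _ => mul_nonneg (inv_nonneg.mpr (hd i).le)
      (Complex.normSq_nonneg _)) ⟨i0, Finset.mem_univ _,
      mul_pos (inv_pos.mpr (hd i0)) (Complex.normSq_pos.mpr hi0')⟩
  set a : ℂ := ∑ i, (starRingEnd ℂ) (v i) * w i with ha_def
  have ha1 : a = lam * (c : ℂ) := by
    rw [ha_def, hc_def]
    push_cast
    rw [Finset.mul_sum]
    refine Finset.sum_congr rfl fun i _ => ?_
    rw [hkey i, ← Complex.mul_conj]
    ring
  have haexp : a = ∑ i, ∑ j, (starRingEnd ℂ) (v i) * ((S i j : ℝ) : ℂ) * v j := by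
    rw [ha_def]
    refine Finset.sum_congr rfl fun i _ => ?_
    rw [hw i, Finset.mul_sum]
    refine Finset.sum_congr rfl fun j _ => ?_
    ring
  have ha2 : (starRingEnd ℂ) a = -a := by
    calc (starRingEnd ℂ) a
        = ∑ j, ∑ i, v i * ((S i j : ℝ) : ℂ) * (starRingEnd ℂ) (v j) := by
          rw [haexp]
          simp only [map_sum, _root_.map_mul, Complex.conj_conj, Complex.conj_ofReal]
          exact Finset.sum_comm
      _ = ∑ j, ∑ i, -((starRingEnd ℂ) (v j) * ((S j i : ℝ) : ℂ) * v i) := by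
          refine Finset.sum_congr rfl fun j _ => Finset.sum_congr rfl fun i _ => ?_
          rw [hskew j i]
          push_cast
          ring
      _ = -a := by
          rw [haexp]
          simp only [Finset.sum_neg_distrib]
  have hre : a.re = 0 := by
    have h := congrArg Complex.re ha2
    simp only [Complex.conj_re, Complex.neg_re] at h
    linarith
  have hlc : lam.re * c = 0 := by
    have h := congrArg Complex.re ha1
    rw [hre] at h
    simpa [Complex.mul_re] using h.symm
  rcases mul_eq_zero.mp hlc with h | h
  · exact h
  · exact absurd h hc_pos.ne'
end

section
/- Let A be an n×m real matrix with a unique saddle point (x*,y*) of xᵀAy over Δₙ×Δₘ, and let B be the submatrix of A restricted to the rows in Supp(x*) and columns in Supp(y*). If x̃ ∈ ℝ^{|Supp(x*)|} and ỹ ∈ ℝ^{|Supp(y*)|} satisfy Bỹ = 0, Bᵀx̃ = 0, 1ᵀx̃ = 0 and 1ᵀỹ = 0, then x̃ = 0 and ỹ = 0. -/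
open Matrix Finset

section Farkas

variable {H : Type*} [NormedAddCommGroup H] [InnerProductSpace ℝ H] [FiniteDimensional ℝ H]

private lemma sum_support_subtype {ι M : Type*} [Fintype ι] [AddCommMonoid M]
    (p : ι → Prop) [DecidablePred p] (h : ι → M) (hz : ∀ i, ¬ p i → h i = 0) :
    ∑ i : Subtype p, h i.1 = ∑ i, h i := by
  rw [← Finset.sum_subtype (Finset.univ.filter p) (by simp) h]
  exact Finset.sum_filter_of_ne (fun x _ hx => by by_contra hp; exact hx (hz x hp))

private lemma conic_carath_aux {ι : Type*} [Fintype ι] (c : ι → H) :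
    ∀ (N : ℕ) (u : ι → ℝ), (∀ i, 0 ≤ u i) →
      (Finset.univ.filter fun i => u i ≠ 0).card ≤ N →
      ∃ u' : ι → ℝ, (∀ i, 0 ≤ u' i) ∧
        ∑ i, u' i • c i = ∑ i, u i • c i ∧
        LinearIndependent ℝ (fun i : {i // u' i ≠ 0} => c i.1) := by
  classical
  intro N
  induction N with
  | zero =>
    intro u hu hcard
    have hempty : ∀ i, u i = 0 := by
      intro i
      by_contra h
      have hmem : i ∈ Finset.univ.filter fun i => u i ≠ 0 := by simp [h]
      have := Finset.card_pos.2 ⟨i, hmem⟩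
      omega
    refine ⟨u, hu, rfl, ?_⟩
    haveI : IsEmpty {i // u i ≠ 0} := ⟨fun i => i.2 (hempty i.1)⟩
    exact linearIndependent_empty_type
  | succ N ih =>
    intro u hu hcard
    by_cases hli : LinearIndependent ℝ (fun i : {i // u i ≠ 0} => c i.1)
    · exact ⟨u, hu, rfl, hli⟩
    obtain ⟨g, hgsum, i₀, hgi₀⟩ := Fintype.not_linearIndependent_iff.1 hli
    obtain ⟨lam, hlam0, hlamsum, j₀, hj₀⟩ :
        ∃ lam : ι → ℝ, (∀ i, u i = 0 → lam i = 0) ∧ (∑ i, lam i • c i = 0) ∧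
          ∃ j, 0 < lam j := by
      have key : ∀ (g' : {i // u i ≠ 0} → ℝ), ∑ i, g' i • c i.1 = 0 →
          ∑ i, (fun i => if h : u i ≠ 0 then g' ⟨i, h⟩ else 0) i • c i = 0 := by
        intro g' hg'
        rw [← sum_support_subtype (fun i => u i ≠ 0)
          (fun i => (if h : u i ≠ 0 then g' ⟨i, h⟩ else 0) • c i)
          (fun i hi => by simp [dif_neg hi])]
        refine Eq.trans (Finset.sum_congr rfl fun i _ => ?_) hg'
        rw [dif_pos i.2]
      rcases lt_or_gt_of_ne hgi₀ with hneg | hpos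
      · refine ⟨fun i => if h : u i ≠ 0 then -g ⟨i, h⟩ else 0,
          fun i h => dif_neg (by simp [h]), ?_, i₀.1, ?_⟩
        · exact key (fun i => -g i) (by simpa [neg_smul] using congrArg Neg.neg hgsum)
        · show 0 < if h : u i₀.1 ≠ 0 then -g ⟨i₀.1, h⟩ else 0
          rw [dif_pos i₀.2]; simpa using hneg
      · exact ⟨fun i => if h : u i ≠ 0 then g ⟨i, h⟩ else 0,
          fun i h => dif_neg (by simp [h]), key g hgsum, i₀.1, by
            show 0 < if h : u i₀.1 ≠ 0 then g ⟨i₀.1, h⟩ else 0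
            rw [dif_pos i₀.2]; exact hpos⟩
    set s : Finset ι := Finset.univ.filter fun i => 0 < lam i with hs_def
    have hs : s.Nonempty := ⟨j₀, by simp [hs_def, hj₀]⟩
    set t : ℝ := s.inf' hs fun i => u i / lam i with ht_def
    obtain ⟨i₁, hi₁s, hi₁⟩ := Finset.exists_mem_eq_inf' hs fun i => u i / lam i
    have hlami₁ : 0 < lam i₁ := by
      have := Finset.mem_filter.1 hi₁s; exact this.2
    have ht0 : 0 ≤ t := by
      rw [ht_def, hi₁]; exact div_nonneg (hu i₁) hlami₁.le
    set u' : ι → ℝ := fun i => u i - t * lam i with hu'_def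
    have hu' : ∀ i, 0 ≤ u' i := by
      intro i
      by_cases h : 0 < lam i
      · have h1 : t ≤ u i / lam i := Finset.inf'_le _ (by simp [hs_def, h])
        have h2 := (le_div_iff₀ h).1 h1
        simp only [hu'_def]; linarith
      · push_neg at h
        have : t * lam i ≤ 0 := mul_nonpos_of_nonneg_of_nonpos ht0 h
        have := hu i
        simp only [hu'_def]; linarith
    have hsupp : ∀ i, u' i ≠ 0 → u i ≠ 0 := by
      intro i hi hui
      exact hi (by simp [hu'_def, hui, hlam0 i hui])
    have hsum' : ∑ i, u' i • c i = ∑ i, u i • c i := by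
      simp only [hu'_def, sub_smul, Finset.sum_sub_distrib, mul_smul]
      rw [← Finset.smul_sum, hlamsum, smul_zero, sub_zero]
    have hui₁ : u i₁ ≠ 0 := fun h => by
      have := hlam0 i₁ h; exact absurd this (ne_of_gt hlami₁)
    have hu'i₁ : u' i₁ = 0 := by
      simp only [hu'_def, ht_def, hi₁]
      rw [div_mul_cancel₀ _ (ne_of_gt hlami₁)]; ring
    have hcard' : (Finset.univ.filter fun i => u' i ≠ 0).card ≤ N := by
      have hssub : (Finset.univ.filter fun i => u' i ≠ 0) ⊂
          (Finset.univ.filter fun i => u i ≠ 0) := by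
        refine ⟨fun i hi => ?_, fun hsub => ?_⟩
        · simp only [Finset.mem_filter, Finset.mem_univ, true_and] at hi ⊢
          exact hsupp i hi
        · have h1 : i₁ ∈ Finset.univ.filter fun i => u i ≠ 0 := by simp [hui₁]
          have h2 := hsub h1
          simp only [Finset.mem_filter, Finset.mem_univ, true_and] at h2
          exact h2 hu'i₁
      have := Finset.card_lt_card hssub
      omega
    obtain ⟨u'', h1, h2, h3⟩ := ih u' hu' hcard'
    exact ⟨u'', h1, by rw [h2, hsum'], h3⟩

end Farkas
section F2
variable {H : Type*} [NormedAddCommGroup H] [InnerProductSpace ℝ H] [FiniteDimensional ℝ H]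

private lemma cone_isClosed_of_li {ι : Type*} [Fintype ι] (c : ι → H)
    (hc : LinearIndependent ℝ c) :
    IsClosed {x : H | ∃ u : ι → ℝ, (∀ i, 0 ≤ u i) ∧ ∑ i, u i • c i = x} := by
  classical
  let L : (ι → ℝ) →ₗ[ℝ] H :=
    { toFun := fun u => ∑ i, u i • c i
      map_add' := fun u v => by simp [add_smul, Finset.sum_add_distrib]
      map_smul' := fun r v => by simp [Finset.smul_sum, mul_smul] }
  have hker : LinearMap.ker L = ⊥ := by
    rw [LinearMap.ker_eq_bot']
    intro u hu
    exact funext (Fintype.linearIndependent_iff.1 hc u hu)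
  have hemb : Topology.IsClosedEmbedding L := L.isClosedEmbedding_of_injective hker
  have hset : {x : H | ∃ u : ι → ℝ, (∀ i, 0 ≤ u i) ∧ ∑ i, u i • c i = x}
      = L '' {u : ι → ℝ | ∀ i, 0 ≤ u i} := by
    ext x
    constructor
    · rintro ⟨u, hu, rfl⟩; exact ⟨u, hu, rfl⟩
    · rintro ⟨u, hu, rfl⟩; exact ⟨u, hu, rfl⟩
  rw [hset]
  refine hemb.isClosedMap _ ?_
  have : {u : ι → ℝ | ∀ i, 0 ≤ u i} = ⋂ i, {u : ι → ℝ | 0 ≤ u i} := by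
    ext u; simp [Set.mem_iInter]
  rw [this]
  exact isClosed_iInter fun i => isClosed_le continuous_const (continuous_apply i)

private lemma cone_isClosed {ι : Type*} [Fintype ι] (c : ι → H) :
    IsClosed {x : H | ∃ u : ι → ℝ, (∀ i, 0 ≤ u i) ∧ ∑ i, u i • c i = x} := by
  classical
  have hset : {x : H | ∃ u : ι → ℝ, (∀ i, 0 ≤ u i) ∧ ∑ i, u i • c i = x}
      = ⋃ (s : {s : Finset ι // LinearIndependent ℝ (fun i : {i // i ∈ s} => c i.1)}),
          {x : H | ∃ w : {i // i ∈ s.1} → ℝ, (∀ i, 0 ≤ w i) ∧ ∑ i, w i • c i.1 = x} := by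
    ext x
    simp only [Set.mem_setOf_eq, Set.mem_iUnion]
    constructor
    · rintro ⟨u, hu, rfl⟩
      obtain ⟨u', hu', hsum, hli⟩ := conic_carath_aux c
        ((Finset.univ.filter fun i => u i ≠ 0).card) u hu le_rfl
      set s : Finset ι := Finset.univ.filter fun i => u' i ≠ 0 with hs_def
      have hmem : ∀ i : ι, i ∈ s ↔ u' i ≠ 0 := by simp [hs_def]
      have hli' : LinearIndependent ℝ (fun i : {i // i ∈ s} => c i.1) := by
        have hf : Function.Injective
            (fun i : {i // i ∈ s} => (⟨i.1, (hmem i.1).1 i.2⟩ : {i // u' i ≠ 0})) := by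
          intro a b h
          apply Subtype.ext
          simpa using congrArg Subtype.val h
        have h2 := hli.comp _ hf
        exact h2
      refine ⟨⟨s, hli'⟩, fun i => u' i.1, fun i => hu' i.1, ?_⟩
      show (∑ i : {i // i ∈ s}, u' i.1 • c i.1) = ∑ i, u i • c i
      rw [← hsum]
      calc (∑ i : {i // i ∈ s}, u' i.1 • c i.1)
          = ∑ i ∈ s.attach, u' i.1 • c i.1 := rfl
        _ = ∑ i ∈ s, u' i • c i := Finset.sum_attach s (fun i => u' i • c i)
        _ = ∑ i, u' i • c i := by
            refine Finset.sum_subset (Finset.subset_univ s) (fun i _ hin => ?_)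
            have : u' i = 0 := by
              by_contra h
              exact hin ((hmem i).2 h)
            simp [this]
    · rintro ⟨⟨s, hli⟩, w, hw, rfl⟩
      refine ⟨fun i => if h : i ∈ s then w ⟨i, h⟩ else 0, fun i => ?_, ?_⟩
      · show 0 ≤ if h : i ∈ s then w ⟨i, h⟩ else 0
        by_cases h : i ∈ s
        · rw [dif_pos h]; exact hw _
        · rw [dif_neg h]
      · calc (∑ i, (if h : i ∈ s then w ⟨i, h⟩ else 0) • c i)
            = ∑ i ∈ s, (if h : i ∈ s then w ⟨i, h⟩ else 0) • c i := by
              refine (Finset.sum_subset (Finset.subset_univ s) (fun i _ hin => ?_)).symm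
              rw [dif_neg hin, zero_smul]
          _ = ∑ i ∈ s.attach, (if h : i.1 ∈ s then w ⟨i.1, h⟩ else 0) • c i.1 :=
              (Finset.sum_attach s (fun i => (if h : i ∈ s then w ⟨i, h⟩ else 0) • c i)).symm
          _ = ∑ i : {i // i ∈ s}, w i • c i.1 :=
              Finset.sum_congr rfl (fun i _ => by rw [dif_pos i.2])
  rw [hset]
  exact isClosed_iUnion_of_finite fun s =>
    cone_isClosed_of_li (fun i : {i // i ∈ s.1} => c i.1) s.2

open scoped InnerProductSpace in
theorem farkas_aux_s16 {ι : Type*} [Fintype ι] (c : ι → H) (b : H) :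
    (∃ u : ι → ℝ, (∀ i, 0 ≤ u i) ∧ ∑ i, u i • c i = b) ∨
    ∃ z : H, (∀ i, 0 ≤ ⟪c i, z⟫_ℝ) ∧ ⟪z, b⟫_ℝ < 0 := by
  classical
  by_cases hb : ∃ u : ι → ℝ, (∀ i, 0 ≤ u i) ∧ ∑ i, u i • c i = b
  · exact Or.inl hb
  right
  set K : ConvexCone ℝ H :=
    { carrier := {x : H | ∃ u : ι → ℝ, (∀ i, 0 ≤ u i) ∧ ∑ i, u i • c i = x}
      smul_mem' := by
        rintro r hr x ⟨u, hu, rfl⟩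
        refine ⟨fun i => r * u i, fun i => mul_nonneg hr.le (hu i), ?_⟩
        rw [Finset.smul_sum]
        refine Finset.sum_congr rfl fun i _ => ?_
        show (r * u i) • c i = r • u i • c i
        rw [mul_smul]
      add_mem' := by
        rintro x ⟨u, hu, rfl⟩ y ⟨u', hu', rfl⟩
        exact ⟨fun i => u i + u' i, fun i => add_nonneg (hu i) (hu' i),
          by simp [add_smul, Finset.sum_add_distrib]⟩ } with hK_def
  have hne : (K : Set H).Nonempty := ⟨0, ⟨fun _ => 0, fun i => le_rfl, by simp⟩⟩
  have hcl : IsClosed (K : Set H) := cone_isClosed c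
  have hbK : b ∉ K := hb
  obtain ⟨y, hy, hyb⟩ :=
    ProperCone.hyperplane_separation' (E := H) (x₀ := b)
      { carrier := (K : Set H)
        add_mem' := fun ha hb' => K.add_mem ha hb'
        zero_mem' := ⟨fun _ => 0, fun i => le_rfl, by simp⟩
        smul_mem' := by
          rintro r x ⟨u, hu, rfl⟩
          exact ⟨fun i => (r : ℝ) * u i, fun i => mul_nonneg r.2 (hu i),
            by simp [Finset.smul_sum, mul_smul, NNReal.smul_def]⟩
        isClosed' := hcl } (by exact hbK)
  refine ⟨y, fun i => ?_, by have := real_inner_comm y b; linarith⟩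
  refine hy (c i) ⟨fun j => if j = i then 1 else 0, fun j => by positivity, ?_⟩
  simp
end F2

theorem farkas_pi {κ ι : Type*} [Fintype κ] [Fintype ι] (v : ι → κ → ℝ) (b : κ → ℝ) :
    (∃ u : ι → ℝ, (∀ i, 0 ≤ u i) ∧ ∑ i, u i • v i = b) ∨
    ∃ z : κ → ℝ, (∀ i, 0 ≤ ∑ r, v i r * z r) ∧ (∑ r, b r * z r) < 0 := by
  classical
  set E := WithLp.linearEquiv 2 ℝ (κ → ℝ) with hE
  have happ : ∀ (x : EuclideanSpace ℝ κ) (r : κ), x r = E x r := fun x r => rfl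
  rcases farkas_aux_s16 (H := EuclideanSpace ℝ κ) (fun i => E.symm (v i)) (E.symm b) with
    ⟨u, hu, hsum⟩ | ⟨z, hz, hzb⟩
  · left
    refine ⟨u, hu, ?_⟩
    have : E.symm (∑ i, u i • v i) = E.symm b := by
      rw [map_sum]
      simpa [_root_.map_smul] using hsum
    exact E.symm.injective this
  · right
    refine ⟨E z, fun i => ?_, ?_⟩
    · have h := hz i
      rw [real_inner_comm, PiLp.inner_apply] at h
      refine le_of_le_of_eq h (Finset.sum_congr rfl fun r _ => ?_)
      show inner ℝ (z r) (E.symm (v i) r) = v i r * E z r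
      have h1 : E.symm (v i) r = v i r := rfl
      have h2 : E z r = z r := rfl
      rw [h1, h2, RCLike.inner_apply]
      simp [mul_comm]
    · have h := hzb
      rw [PiLp.inner_apply] at h
      refine lt_of_eq_of_lt (Finset.sum_congr rfl fun r _ => ?_) h
      show b r * E z r = inner ℝ (z r) (E.symm b r)
      have h1 : E.symm b r = b r := rfl
      have h2 : E z r = z r := rfl
      rw [h1, h2, RCLike.inner_apply]
      simp [mul_comm]

private lemma dot1 {n m : ℕ} (A : Matrix (Fin n) (Fin m) ℝ) (x : Fin n → ℝ) (y : Fin m → ℝ) :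
    x ⬝ᵥ A.mulVec y = ∑ j, (∑ i, x i * A i j) * y j := by
  calc x ⬝ᵥ A.mulVec y = ∑ i, ∑ j, x i * (A i j * y j) := by
        simp [dotProduct, Matrix.mulVec, Finset.mul_sum]
    _ = ∑ j, ∑ i, x i * (A i j * y j) := Finset.sum_comm
    _ = ∑ j, (∑ i, x i * A i j) * y j := by
        refine Finset.sum_congr rfl fun j _ => ?_
        rw [Finset.sum_mul]
        exact Finset.sum_congr rfl fun i _ => (mul_assoc _ _ _).symm

private lemma dot2 {n m : ℕ} (A : Matrix (Fin n) (Fin m) ℝ) (x : Fin n → ℝ) (y : Fin m → ℝ) :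
    x ⬝ᵥ A.mulVec y = ∑ i, x i * (∑ j, A i j * y j) := by
  simp [dotProduct, Matrix.mulVec]

private lemma single_nonneg' {k : ℕ} (j : Fin k) : ∀ j', (0:ℝ) ≤ (Pi.single j (1:ℝ) : Fin k → ℝ) j' := by
  intro j'
  rcases eq_or_ne j' j with h | h <;> simp [Pi.single_apply, h]

private lemma single_sum' {k : ℕ} (j : Fin k) : ∑ j', (Pi.single j 1 : Fin k → ℝ) j' = 1 := by
  simp [Pi.single_apply]

private lemma keyGT (n m : ℕ) (A : Matrix (Fin n) (Fin m) ℝ)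
    (xs : Fin n → ℝ) (ys : Fin m → ℝ)
    (hxs : (∀ i, 0 ≤ xs i) ∧ ∑ i, xs i = 1) (hys : (∀ j, 0 ≤ ys j) ∧ ∑ j, ys j = 1)
    (hsaddle : ∀ x : Fin n → ℝ, (∀ i, 0 ≤ x i) → ∑ i, x i = 1 →
        ∀ y : Fin m → ℝ, (∀ j, 0 ≤ y j) → ∑ j, y j = 1 →
        x ⬝ᵥ A.mulVec ys ≤ xs ⬝ᵥ A.mulVec ys ∧ xs ⬝ᵥ A.mulVec ys ≤ xs ⬝ᵥ A.mulVec y)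
    (huniq : ∀ x : Fin n → ℝ, (∀ i, 0 ≤ x i) → ∑ i, x i = 1 →
        ∀ y : Fin m → ℝ, (∀ j, 0 ≤ y j) → ∑ j, y j = 1 →
        (∀ x' : Fin n → ℝ, (∀ i, 0 ≤ x' i) → ∑ i, x' i = 1 →
         ∀ y' : Fin m → ℝ, (∀ j, 0 ≤ y' j) → ∑ j, y' j = 1 →
         x' ⬝ᵥ A.mulVec y ≤ x ⬝ᵥ A.mulVec y ∧ x ⬝ᵥ A.mulVec y ≤ x ⬝ᵥ A.mulVec y') →
        x = xs ∧ y = ys)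
    (j₀ : Fin m) (hj : ys j₀ = 0) :
    xs ⬝ᵥ A.mulVec ys < ∑ i, xs i * A i j₀ := by
  classical
  set v : ℝ := xs ⬝ᵥ A.mulVec ys with hv
  have hrow : ∀ j, v ≤ ∑ i, xs i * A i j := by
    intro j
    have h := (hsaddle xs hxs.1 hxs.2 (Pi.single j 1) (single_nonneg' j) (single_sum' j)).2
    have heq : xs ⬝ᵥ A.mulVec (Pi.single j 1) = ∑ i, xs i * A i j := by
      rw [dot2]
      refine Finset.sum_congr rfl fun i _ => ?_
      congr 1
      simp [Pi.single_apply, mul_ite]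
    rwa [heq] at h
  have hcol : ∀ i, (∑ j, A i j * ys j) ≤ v := by
    intro i
    have h := (hsaddle (Pi.single i 1) (single_nonneg' i) (single_sum' i) ys hys.1 hys.2).1
    have heq : (Pi.single i 1 : Fin n → ℝ) ⬝ᵥ A.mulVec ys = ∑ j, A i j * ys j := by
      rw [single_dotProduct]
      simp [Matrix.mulVec, dotProduct]
    rwa [heq] at h
  rcases farkas_pi (κ := Fin n ⊕ Unit) (ι := Fin m ⊕ (Fin n ⊕ Unit))
      (fun p : Fin m ⊕ (Fin n ⊕ Unit) =>
        Sum.elim (fun j => Sum.elim (fun i => A i j - v) (fun _ => if j = j₀ then 1 else 0))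
          (Sum.elim (fun i => Sum.elim (fun i' => if i' = i then 1 else 0) 0)
            (fun _ => Sum.elim 0 (fun _ => -1))) p)
      (Sum.elim 0 (fun _ => 1)) with ⟨u, hu, hsum⟩ | ⟨z, hz, hzb⟩
  · -- primal feasible: contradiction with uniqueness of ys
    exfalso
    have hcr : ∀ i : Fin n,
        (∑ j, u (Sum.inl j) * (A i j - v)) + u (Sum.inr (Sum.inl i)) = 0 := by
      intro i
      have h := congrFun hsum (Sum.inl i)
      rw [Finset.sum_apply] at h
      simp only [Pi.smul_apply, smul_eq_mul] at h
      rw [Fintype.sum_sum_type, Fintype.sum_sum_type] at h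
      simpa using h
    have hlast : u (Sum.inl j₀) - u (Sum.inr (Sum.inr ())) = 1 := by
      have h := congrFun hsum (Sum.inr ())
      rw [Finset.sum_apply] at h
      simp only [Pi.smul_apply, smul_eq_mul] at h
      rw [Fintype.sum_sum_type, Fintype.sum_sum_type] at h
      simpa [mul_ite, Finset.sum_ite_eq', sub_eq_add_neg] using h
    set y : Fin m → ℝ := fun j => u (Sum.inl j) with hy
    set t : ℝ := u (Sum.inr (Sum.inr ())) with ht
    have hy0 : ∀ j, 0 ≤ y j := fun j => hu _
    have ht0 : 0 ≤ t := hu _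
    set τ : ℝ := ∑ j, y j with hτ
    have hyj₀1 : (1:ℝ) ≤ y j₀ := by linarith [hlast, ht0]
    have hτpos : 0 < τ := by
      have h1 : y j₀ ≤ τ := Finset.single_le_sum (fun j _ => hy0 j) (Finset.mem_univ j₀)
      linarith
    set yhat : Fin m → ℝ := fun j => y j / τ with hyhat
    have hyhat0 : ∀ j, 0 ≤ yhat j := fun j => div_nonneg (hy0 j) hτpos.le
    have hyhatsum : ∑ j, yhat j = 1 := by
      rw [hyhat]
      rw [← Finset.sum_div]
      exact div_self (ne_of_gt hτpos)
    have hyhatrow : ∀ i, (∑ j, A i j * yhat j) ≤ v := by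
      intro i
      have h := hcr i
      have hs : 0 ≤ u (Sum.inr (Sum.inl i)) := hu _
      have hexp : ∑ j, y j * (A i j - v) = (∑ j, y j * A i j) - v * τ := by
        rw [hτ, Finset.mul_sum, ← Finset.sum_sub_distrib]
        refine Finset.sum_congr rfl fun j _ => ?_
        ring
      have h2 : ∑ j, y j * A i j ≤ v * τ := by
        rw [hexp] at h
        linarith
      have h3 : ∑ j, A i j * yhat j = (∑ j, y j * A i j) / τ := by
        rw [Finset.sum_div]
        refine Finset.sum_congr rfl fun j _ => ?_
        rw [hyhat]
        ring
      rw [h3, div_le_iff₀ hτpos]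
      linarith
    have hxsyhat : xs ⬝ᵥ A.mulVec yhat = v := by
      have hle : xs ⬝ᵥ A.mulVec yhat ≤ v := by
        rw [dot2]
        calc ∑ i, xs i * (∑ j, A i j * yhat j) ≤ ∑ i, xs i * v :=
              Finset.sum_le_sum fun i _ =>
                mul_le_mul_of_nonneg_left (hyhatrow i) (hxs.1 i)
          _ = v := by rw [← Finset.sum_mul, hxs.2, one_mul]
      have hge : v ≤ xs ⬝ᵥ A.mulVec yhat := by
        rw [dot1]
        calc v = ∑ j, v * yhat j := by rw [← Finset.mul_sum, hyhatsum, mul_one]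
          _ ≤ ∑ j, (∑ i, xs i * A i j) * yhat j :=
              Finset.sum_le_sum fun j _ =>
                mul_le_mul_of_nonneg_right (hrow j) (hyhat0 j)
      linarith
    have hsaddle2 : ∀ x' : Fin n → ℝ, (∀ i, 0 ≤ x' i) → ∑ i, x' i = 1 →
        ∀ y' : Fin m → ℝ, (∀ j, 0 ≤ y' j) → ∑ j, y' j = 1 →
        x' ⬝ᵥ A.mulVec yhat ≤ xs ⬝ᵥ A.mulVec yhat ∧
          xs ⬝ᵥ A.mulVec yhat ≤ xs ⬝ᵥ A.mulVec y' := by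
      intro x' hx'0 hx'1 y' hy'0 hy'1
      constructor
      · rw [hxsyhat, dot2]
        calc ∑ i, x' i * (∑ j, A i j * yhat j) ≤ ∑ i, x' i * v :=
              Finset.sum_le_sum fun i _ =>
                mul_le_mul_of_nonneg_left (hyhatrow i) (hx'0 i)
          _ = v := by rw [← Finset.sum_mul, hx'1, one_mul]
      · rw [hxsyhat, dot1]
        calc v = ∑ j, v * y' j := by rw [← Finset.mul_sum, hy'1, mul_one]
          _ ≤ ∑ j, (∑ i, xs i * A i j) * y' j :=
              Finset.sum_le_sum fun j _ =>
                mul_le_mul_of_nonneg_right (hrow j) (hy'0 j)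
    have hys_eq := (huniq xs hxs.1 hxs.2 yhat hyhat0 hyhatsum hsaddle2).2
    have hyj₀ : 0 < yhat j₀ := by
      rw [hyhat]
      positivity
    rw [hys_eq, hj] at hyj₀
    exact lt_irrefl _ hyj₀
  · -- dual feasible: yields the strict inequality
    have hxb0 : ∀ i, 0 ≤ z (Sum.inl i) := by
      intro i
      have h := hz (Sum.inr (Sum.inl i))
      rw [Fintype.sum_sum_type] at h
      simpa [mul_ite, Finset.sum_ite_eq'] using h
    have hβ0 : z (Sum.inr ()) ≤ 0 := by
      have h := hz (Sum.inr (Sum.inr ()))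
      rw [Fintype.sum_sum_type] at h
      simp at h
      linarith
    have hβlt : z (Sum.inr ()) < 0 := by
      have h := hzb
      rw [Fintype.sum_sum_type] at h
      simpa using h
    have hconstraint : ∀ j, v * (∑ i, z (Sum.inl i))
        - (if j = j₀ then 1 else 0) * z (Sum.inr ()) ≤ ∑ i, z (Sum.inl i) * A i j := by
      intro j
      have h := hz (Sum.inl j)
      rw [Fintype.sum_sum_type] at h
      simp only [Sum.elim_inl, Sum.elim_inr] at h
      have hexp : ∑ i, (A i j - v) * z (Sum.inl i)
          = (∑ i, z (Sum.inl i) * A i j) - v * (∑ i, z (Sum.inl i)) := by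
        rw [Finset.mul_sum, ← Finset.sum_sub_distrib]
        refine Finset.sum_congr rfl fun i _ => ?_
        ring
      have h2 : 0 ≤ (∑ i, (A i j - v) * z (Sum.inl i))
          + (if j = j₀ then 1 else 0) * z (Sum.inr ()) := by
        simpa using h
      rw [hexp] at h2
      linarith
    set σ : ℝ := ∑ i, z (Sum.inl i) with hσ
    have hσ0 : 0 ≤ σ := Finset.sum_nonneg fun i _ => hxb0 i
    have hσpos : 0 < σ := by
      rcases hσ0.lt_or_eq with h | h
      · exact h
      · exfalso
        have hall : ∀ i ∈ Finset.univ, z (Sum.inl i) = 0 :=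
          (Finset.sum_eq_zero_iff_of_nonneg fun i _ => hxb0 i).1 h.symm
        have h1 := hconstraint j₀
        have h2 : ∑ i, z (Sum.inl i) * A i j₀ = 0 :=
          Finset.sum_eq_zero fun i hi => by rw [hall i hi, zero_mul]
        rw [if_pos rfl, one_mul, h2, ← h] at h1
        linarith
    set xhat : Fin n → ℝ := fun i => z (Sum.inl i) / σ with hxhat
    have hxhat0 : ∀ i, 0 ≤ xhat i := fun i => div_nonneg (hxb0 i) hσpos.le
    have hxhatsum : ∑ i, xhat i = 1 := by
      rw [hxhat, ← Finset.sum_div]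
      exact div_self (ne_of_gt hσpos)
    have hxhatrow : ∀ j, v ≤ ∑ i, xhat i * A i j := by
      intro j
      have h := hconstraint j
      have h2 : v * σ ≤ ∑ i, z (Sum.inl i) * A i j := by
        rcases eq_or_ne j j₀ with hjj | hjj
        · rw [if_pos hjj, one_mul] at h
          linarith
        · rw [if_neg hjj, zero_mul, sub_zero] at h
          exact h
      have h3 : ∑ i, xhat i * A i j = (∑ i, z (Sum.inl i) * A i j) / σ := by
        rw [Finset.sum_div]
        refine Finset.sum_congr rfl fun i _ => ?_
        rw [hxhat]
        ring
      rw [h3, le_div_iff₀ hσpos]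
      linarith
    have hxhatj₀ : v < ∑ i, xhat i * A i j₀ := by
      have h := hconstraint j₀
      rw [if_pos rfl, one_mul] at h
      have h3 : ∑ i, xhat i * A i j₀ = (∑ i, z (Sum.inl i) * A i j₀) / σ := by
        rw [Finset.sum_div]
        refine Finset.sum_congr rfl fun i _ => ?_
        rw [hxhat]
        ring
      rw [h3, lt_div_iff₀ hσpos]
      nlinarith
    have hxhatys : xhat ⬝ᵥ A.mulVec ys = v := by
      have hle : xhat ⬝ᵥ A.mulVec ys ≤ v := by
        rw [dot2]
        calc ∑ i, xhat i * (∑ j, A i j * ys j) ≤ ∑ i, xhat i * v :=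
              Finset.sum_le_sum fun i _ =>
                mul_le_mul_of_nonneg_left (hcol i) (hxhat0 i)
          _ = v := by rw [← Finset.sum_mul, hxhatsum, one_mul]
      have hge : v ≤ xhat ⬝ᵥ A.mulVec ys := by
        rw [dot1]
        calc v = ∑ j, v * ys j := by rw [← Finset.mul_sum, hys.2, mul_one]
          _ ≤ ∑ j, (∑ i, xhat i * A i j) * ys j :=
              Finset.sum_le_sum fun j _ =>
                mul_le_mul_of_nonneg_right (hxhatrow j) (hys.1 j)
      linarith
    have hsaddle2 : ∀ x' : Fin n → ℝ, (∀ i, 0 ≤ x' i) → ∑ i, x' i = 1 →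
        ∀ y' : Fin m → ℝ, (∀ j, 0 ≤ y' j) → ∑ j, y' j = 1 →
        x' ⬝ᵥ A.mulVec ys ≤ xhat ⬝ᵥ A.mulVec ys ∧
          xhat ⬝ᵥ A.mulVec ys ≤ xhat ⬝ᵥ A.mulVec y' := by
      intro x' hx'0 hx'1 y' hy'0 hy'1
      constructor
      · rw [hxhatys, dot2]
        calc ∑ i, x' i * (∑ j, A i j * ys j) ≤ ∑ i, x' i * v :=
              Finset.sum_le_sum fun i _ =>
                mul_le_mul_of_nonneg_left (hcol i) (hx'0 i)
          _ = v := by rw [← Finset.sum_mul, hx'1, one_mul]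
      · rw [hxhatys, dot1]
        calc v = ∑ j, v * y' j := by rw [← Finset.mul_sum, hy'1, mul_one]
          _ ≤ ∑ j, (∑ i, xhat i * A i j) * y' j :=
              Finset.sum_le_sum fun j _ =>
                mul_le_mul_of_nonneg_right (hxhatrow j) (hy'0 j)
    have hxs_eq := (huniq xhat hxhat0 hxhatsum ys hys.1 hys.2 hsaddle2).1
    rw [← hxs_eq]
    exact hxhatj₀

private lemma master (n m : ℕ) (A : Matrix (Fin n) (Fin m) ℝ)
    (xs : Fin n → ℝ) (ys : Fin m → ℝ)
    (hxs : (∀ i, 0 ≤ xs i) ∧ ∑ i, xs i = 1) (hys : (∀ j, 0 ≤ ys j) ∧ ∑ j, ys j = 1)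
    (hsaddle : ∀ x : Fin n → ℝ, (∀ i, 0 ≤ x i) → ∑ i, x i = 1 →
        ∀ y : Fin m → ℝ, (∀ j, 0 ≤ y j) → ∑ j, y j = 1 →
        x ⬝ᵥ A.mulVec ys ≤ xs ⬝ᵥ A.mulVec ys ∧ xs ⬝ᵥ A.mulVec ys ≤ xs ⬝ᵥ A.mulVec y)
    (huniq : ∀ x : Fin n → ℝ, (∀ i, 0 ≤ x i) → ∑ i, x i = 1 →
        ∀ y : Fin m → ℝ, (∀ j, 0 ≤ y j) → ∑ j, y j = 1 →
        (∀ x' : Fin n → ℝ, (∀ i, 0 ≤ x' i) → ∑ i, x' i = 1 →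
         ∀ y' : Fin m → ℝ, (∀ j, 0 ≤ y' j) → ∑ j, y' j = 1 →
         x' ⬝ᵥ A.mulVec y ≤ x ⬝ᵥ A.mulVec y ∧ x ⬝ᵥ A.mulVec y ≤ x ⬝ᵥ A.mulVec y') →
        x = xs ∧ y = ys)
    (xt : {i // 0 < xs i} → ℝ)
    (hvm : ∀ j, 0 < ys j → ∑ i : {i // 0 < xs i}, xt i * A i.1 j = 0)
    (hsx : ∑ i, xt i = 0) : xt = 0 := by
  classical
  set v : ℝ := xs ⬝ᵥ A.mulVec ys with hv
  have hrow : ∀ j, v ≤ ∑ i, xs i * A i j := by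
    intro j
    have h := (hsaddle xs hxs.1 hxs.2 (Pi.single j 1) (single_nonneg' j) (single_sum' j)).2
    have heq : xs ⬝ᵥ A.mulVec (Pi.single j 1) = ∑ i, xs i * A i j := by
      rw [dot2]
      refine Finset.sum_congr rfl fun i _ => ?_
      congr 1
      simp [Pi.single_apply, mul_ite]
    rwa [heq] at h
  have hcol : ∀ i, (∑ j, A i j * ys j) ≤ v := by
    intro i
    have h := (hsaddle (Pi.single i 1) (single_nonneg' i) (single_sum' i) ys hys.1 hys.2).1
    have heq : (Pi.single i 1 : Fin n → ℝ) ⬝ᵥ A.mulVec ys = ∑ j, A i j * ys j := by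
      rw [single_dotProduct]
      simp [Matrix.mulVec, dotProduct]
    rwa [heq] at h
  have hstrict : ∀ j, ys j = 0 → v < ∑ i, xs i * A i j := fun j h =>
    keyGT n m A xs ys hxs hys hsaddle huniq j h
  have hcolsupp : ∀ i, 0 < xs i → (∑ j, A i j * ys j) = v := by
    intro i hi
    by_contra hne
    have hlt : ∑ j, A i j * ys j < v := lt_of_le_of_ne (hcol i) hne
    have hsum2 : ∑ i', xs i' * (∑ j, A i' j * ys j) < ∑ i', xs i' * v :=
      Finset.sum_lt_sum (fun i' _ => mul_le_mul_of_nonneg_left (hcol i') (hxs.1 i'))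
        ⟨i, Finset.mem_univ i, mul_lt_mul_of_pos_left hlt hi⟩
    rw [← dot2, ← Finset.sum_mul, hxs.2, one_mul, ← hv] at hsum2
    exact lt_irrefl _ hsum2
  set xe : Fin n → ℝ := fun i => if h : 0 < xs i then xt ⟨i, h⟩ else 0 with hxe
  have hxe0 : ∀ i, ¬ 0 < xs i → xe i = 0 := fun i h => dif_neg h
  have hxesupp : ∀ i : {i // 0 < xs i}, xe i.1 = xt i := fun i => dif_pos i.2
  have hxesum : ∑ i, xe i = 0 := by
    rw [← sum_support_subtype (fun i => 0 < xs i) xe hxe0]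
    rw [Finset.sum_congr rfl fun i _ => hxesupp i]
    exact hsx
  have hxerow : ∀ j, ∑ i, xe i * A i j = ∑ i' : {i // 0 < xs i}, xt i' * A i'.1 j := by
    intro j
    rw [← sum_support_subtype (fun i => 0 < xs i) (fun i => xe i * A i j)
      (fun i hi => by show xe i * A i j = 0; rw [hxe0 i hi, zero_mul])]
    exact Finset.sum_congr rfl fun i _ => by rw [hxesupp i]
  have hxeAys : ∑ i, xe i * (∑ j, A i j * ys j) = 0 := by
    rw [← sum_support_subtype (fun i => 0 < xs i) (fun i => xe i * (∑ j, A i j * ys j))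
      (fun i hi => by show xe i * (∑ j, A i j * ys j) = 0; rw [hxe0 i hi, zero_mul])]
    rw [Finset.sum_congr rfl fun i (_ : i ∈ Finset.univ) => by
      rw [hxesupp i, hcolsupp i.1 i.2]]
    rw [← Finset.sum_mul, hsx, zero_mul]
  have hexpand : ∀ (t : ℝ) (j : Fin m), ∑ i, (xs i + t * xe i) * A i j
      = (∑ i, xs i * A i j) + t * ∑ i, xe i * A i j := by
    intro t j
    rw [Finset.mul_sum, ← Finset.sum_add_distrib]
    refine Finset.sum_congr rfl fun i _ => ?_
    ring
  have hev : ∀ᶠ t in nhdsWithin (0:ℝ) (Set.Ioi 0),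
      (∀ i, 0 ≤ xs i + t * xe i) ∧ (∀ j, v ≤ ∑ i, (xs i + t * xe i) * A i j) := by
    refine Filter.Eventually.and ?_ ?_
    · rw [Filter.eventually_all]
      intro i
      by_cases h : 0 < xs i
      · have hc1 : ContinuousAt (fun _ : ℝ => (0:ℝ)) 0 := continuousAt_const
        have hc2 : ContinuousAt (fun t : ℝ => xs i + t * xe i) 0 :=
          (continuous_const.add (continuous_id.mul continuous_const)).continuousAt
        have h3 : (fun _ : ℝ => (0:ℝ)) 0 < xs i + 0 * xe i := by simpa using h
        have h4 := hc1.eventually_lt hc2 h3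
        exact (h4.filter_mono nhdsWithin_le_nhds).mono fun t ht => ht.le
      · refine Filter.Eventually.of_forall fun t => ?_
        rw [hxe0 i h, mul_zero, add_zero]
        exact hxs.1 i
    · rw [Filter.eventually_all]
      intro j
      by_cases h : 0 < ys j
      · refine Filter.Eventually.of_forall fun t => ?_
        rw [hexpand, hxerow, hvm j h, mul_zero, add_zero]
        exact hrow j
      · have hzero : ys j = 0 := le_antisymm (not_lt.1 h) (hys.1 j)
        have hc1 : ContinuousAt (fun _ : ℝ => v) 0 := continuousAt_const
        have hc2 : ContinuousAt (fun t : ℝ => (∑ i, xs i * A i j) + t * ∑ i, xe i * A i j) 0 :=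
          (continuous_const.add (continuous_id.mul continuous_const)).continuousAt
        have h3 : (fun _ : ℝ => v) 0
            < (∑ i, xs i * A i j) + 0 * ∑ i, xe i * A i j := by
          simpa using hstrict j hzero
        have h4 := hc1.eventually_lt hc2 h3
        refine ((h4.filter_mono nhdsWithin_le_nhds).mono fun t ht => ?_)
        rw [hexpand]
        exact ht.le
  obtain ⟨t, ht, htpos⟩ := (hev.and self_mem_nhdsWithin).exists
  have htne : t ≠ 0 := ne_of_gt htpos
  set x' : Fin n → ℝ := fun i => xs i + t * xe i with hx'
  have hx'0 : ∀ i, 0 ≤ x' i := ht.1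
  have hx'sum : ∑ i, x' i = 1 := by
    rw [hx']
    rw [Finset.sum_add_distrib, ← Finset.mul_sum, hxesum, mul_zero, add_zero]
    exact hxs.2
  have hx'Ays : x' ⬝ᵥ A.mulVec ys = v := by
    rw [dot2]
    have : ∑ i, x' i * (∑ j, A i j * ys j)
        = (∑ i, xs i * (∑ j, A i j * ys j)) + t * ∑ i, xe i * (∑ j, A i j * ys j) := by
      rw [Finset.mul_sum, ← Finset.sum_add_distrib]
      refine Finset.sum_congr rfl fun i _ => ?_
      rw [hx']
      ring
    rw [this, hxeAys, mul_zero, add_zero, ← dot2, ← hv]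
  have hsaddle2 : ∀ x'' : Fin n → ℝ, (∀ i, 0 ≤ x'' i) → ∑ i, x'' i = 1 →
      ∀ y'' : Fin m → ℝ, (∀ j, 0 ≤ y'' j) → ∑ j, y'' j = 1 →
      x'' ⬝ᵥ A.mulVec ys ≤ x' ⬝ᵥ A.mulVec ys ∧
        x' ⬝ᵥ A.mulVec ys ≤ x' ⬝ᵥ A.mulVec y'' := by
    intro x'' hx''0 hx''1 y'' hy''0 hy''1
    constructor
    · rw [hx'Ays]
      exact (hsaddle x'' hx''0 hx''1 ys hys.1 hys.2).1
    · rw [hx'Ays, dot1]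
      calc v = ∑ j, v * y'' j := by rw [← Finset.mul_sum, hy''1, mul_one]
        _ ≤ ∑ j, (∑ i, x' i * A i j) * y'' j :=
            Finset.sum_le_sum fun j _ =>
              mul_le_mul_of_nonneg_right (ht.2 j) (hy''0 j)
  have hx'eq := (huniq x' hx'0 hx'sum ys hys.1 hys.2 hsaddle2).1
  have hxe_zero : ∀ i, xe i = 0 := by
    intro i
    have h := congrFun hx'eq i
    have : xs i + t * xe i = xs i := h
    have h2 : t * xe i = 0 := by linarith
    rcases mul_eq_zero.1 h2 with h3 | h3
    · exact absurd h3 htne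
    · exact h3
  funext i
  show xt i = 0
  rw [← hxesupp i]
  exact hxe_zero i.1

theorem stmt_16 (n m : ℕ) (A : Matrix (Fin n) (Fin m) ℝ)
    (xs : Fin n → ℝ) (ys : Fin m → ℝ)
    (hxs : (∀ i, 0 ≤ xs i) ∧ ∑ i, xs i = 1) (hys : (∀ j, 0 ≤ ys j) ∧ ∑ j, ys j = 1)
    (hsaddle : ∀ x : Fin n → ℝ, (∀ i, 0 ≤ x i) → ∑ i, x i = 1 →
        ∀ y : Fin m → ℝ, (∀ j, 0 ≤ y j) → ∑ j, y j = 1 →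
        x ⬝ᵥ A.mulVec ys ≤ xs ⬝ᵥ A.mulVec ys ∧ xs ⬝ᵥ A.mulVec ys ≤ xs ⬝ᵥ A.mulVec y)
    (huniq : ∀ x : Fin n → ℝ, (∀ i, 0 ≤ x i) → ∑ i, x i = 1 →
        ∀ y : Fin m → ℝ, (∀ j, 0 ≤ y j) → ∑ j, y j = 1 →
        (∀ x' : Fin n → ℝ, (∀ i, 0 ≤ x' i) → ∑ i, x' i = 1 →
         ∀ y' : Fin m → ℝ, (∀ j, 0 ≤ y' j) → ∑ j, y' j = 1 →
         x' ⬝ᵥ A.mulVec y ≤ x ⬝ᵥ A.mulVec y ∧ x ⬝ᵥ A.mulVec y ≤ x ⬝ᵥ A.mulVec y') →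
        x = xs ∧ y = ys)
    (B : Matrix {i // 0 < xs i} {j // 0 < ys j} ℝ)
    (hB : ∀ (i : {i // 0 < xs i}) (j : {j // 0 < ys j}), B i j = A i.1 j.1)
    (xt : {i // 0 < xs i} → ℝ) (yt : {j // 0 < ys j} → ℝ)
    (hBy : B.mulVec yt = 0) (hBx : B.transpose.mulVec xt = 0)
    (hsx : ∑ i, xt i = 0) (hsy : ∑ j, yt j = 0) :
    xt = 0 ∧ yt = 0 := by
  have key : ∀ (x : Fin n → ℝ) (y : Fin m → ℝ),
      y ⬝ᵥ (-Aᵀ).mulVec x = -(x ⬝ᵥ A.mulVec y) := by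
    intro x y
    rw [Matrix.neg_mulVec, dotProduct_neg, Matrix.mulVec_transpose,
      dotProduct_comm, ← Matrix.dotProduct_mulVec]
  constructor
  · refine master n m A xs ys hxs hys hsaddle huniq xt ?_ hsx
    intro j hj
    have h := congrFun hBx ⟨j, hj⟩
    have h2 : ∑ i, B i ⟨j, hj⟩ * xt i = 0 := by
      simpa [Matrix.mulVec, dotProduct, Matrix.transpose_apply] using h
    calc ∑ i : {i // 0 < xs i}, xt i * A i.1 j
        = ∑ i, B i ⟨j, hj⟩ * xt i := by
          refine Finset.sum_congr rfl fun i _ => ?_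
          rw [hB i ⟨j, hj⟩]
          ring
      _ = 0 := h2
  · refine master m n (-Aᵀ) ys xs hys hxs ?_ ?_ yt ?_ hsy
    · intro y hy0 hy1 x hx0 hx1
      constructor
      · have h := (hsaddle xs hxs.1 hxs.2 y hy0 hy1).2
        rw [key, key]
        linarith
      · have h := (hsaddle x hx0 hx1 ys hys.1 hys.2).1
        rw [key, key]
        linarith
    · intro y hy0 hy1 x hx0 hx1 hsp
      have hsp' : ∀ x' : Fin n → ℝ, (∀ i, 0 ≤ x' i) → ∑ i, x' i = 1 →
          ∀ y' : Fin m → ℝ, (∀ j, 0 ≤ y' j) → ∑ j, y' j = 1 →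
          x' ⬝ᵥ A.mulVec y ≤ x ⬝ᵥ A.mulVec y ∧ x ⬝ᵥ A.mulVec y ≤ x ⬝ᵥ A.mulVec y' := by
        intro x' hx'0 hx'1 y' hy'0 hy'1
        obtain ⟨h1, h2⟩ := hsp y' hy'0 hy'1 x' hx'0 hx'1
        rw [key, key] at h1
        rw [key, key] at h2
        constructor <;> linarith
      have h := huniq x hx0 hx1 y hy0 hy1 hsp'
      exact ⟨h.2, h.1⟩
    · intro i hi
      have h := congrFun hBy ⟨i, hi⟩
      have h2 : ∑ j, B ⟨i, hi⟩ j * yt j = 0 := by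
        simpa [Matrix.mulVec, dotProduct] using h
      calc ∑ j : {j // 0 < ys j}, yt j * (-Aᵀ) j.1 i
          = -∑ j : {j // 0 < ys j}, B ⟨i, hi⟩ j * yt j := by
            rw [← Finset.sum_neg_distrib]
            refine Finset.sum_congr rfl fun j _ => ?_
            rw [Matrix.neg_apply, Matrix.transpose_apply, hB ⟨i, hi⟩ j]
            ring
        _ = 0 := by rw [h2, neg_zero]
end

section
/- Let p, b ∈ ℝⁿ with p a strictly positive probability vector and all |bᵢ| ≤ 1/2. If ∑ᵢ pᵢ (∑ⱼ pⱼbⱼ - bᵢ)² ≥ ε² for some ε > 0, then defining p'ᵢ = pᵢ(1+bᵢ)/∑ⱼpⱼ(1+bⱼ), one has ∑ᵢ p'ᵢ bᵢ ≥ ∑ᵢ pᵢ bᵢ + (2/3)·ε². -/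
theorem stmt_17 (n : ℕ) (p b : Fin n → ℝ) (hp0 : ∀ i, 0 < p i) (hp1 : ∑ i, p i = 1)
    (hb : ∀ i, |b i| ≤ 1/2) (ε : ℝ) (hε : 0 < ε)
    (hvar : ε ^ 2 ≤ ∑ i, p i * ((∑ j, p j * b j) - b i) ^ 2)
    (p' : Fin n → ℝ) (hp' : ∀ i, p' i = p i * (1 + b i) / ∑ j, p j * (1 + b j)) :
    ∑ i, p i * b i + (2/3) * ε ^ 2 ≤ ∑ i, p' i * b i := by
  set μ := ∑ i, p i * b i with hμ
  have hμle : |μ| ≤ 1/2 := by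
    calc |μ| ≤ ∑ i, |p i * b i| := Finset.abs_sum_le_sum_abs _ _
      _ ≤ ∑ i, p i * (1/2) := by
          apply Finset.sum_le_sum
          intro i _
          rw [abs_mul, abs_of_pos (hp0 i)]
          exact mul_le_mul_of_nonneg_left (hb i) (hp0 i).le
      _ = 1/2 := by rw [← Finset.sum_mul, hp1, one_mul]
  have hS : (∑ j, p j * (1 + b j)) = 1 + μ := by
    simp [mul_add, Finset.sum_add_distrib, hp1]; exact hμ.symm
  have hS1 : (1:ℝ)/2 ≤ 1 + μ := by
    have := abs_le.mp hμle; linarith [this.1]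
  have hS2 : 1 + μ ≤ 3/2 := by
    have := abs_le.mp hμle; linarith [this.2]
  have hSpos : (0:ℝ) < 1 + μ := by linarith
  set Q := ∑ i, p i * b i ^ 2 with hQ
  have hnum : ∑ i, p' i * b i = (μ + Q) / (1 + μ) := by
    rw [Finset.sum_congr rfl (fun i _ => by rw [hp' i]), hS]
    rw [show (∑ i, p i * (1 + b i) / (1 + μ) * b i)
        = (∑ i, p i * (1 + b i) * b i) / (1 + μ) by
      rw [Finset.sum_div]; exact Finset.sum_congr rfl fun i _ => by ring]
    congr 1
    rw [hμ, hQ, ← Finset.sum_add_distrib]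
    apply Finset.sum_congr rfl
    intro i _
    ring
  have hvar' : ∑ i, p i * (μ - b i) ^ 2 = Q - μ ^ 2 := by
    have : ∀ i ∈ Finset.univ, p i * (μ - b i) ^ 2
        = p i * μ ^ 2 - 2 * μ * (p i * b i) + p i * b i ^ 2 := by
      intro i _; ring
    rw [Finset.sum_congr rfl this]
    simp only [Finset.sum_add_distrib, Finset.sum_sub_distrib, ← Finset.sum_mul,
      ← Finset.mul_sum, hp1]
    rw [hμ, hQ]; ring
  have hε2 : ε ^ 2 ≤ Q - μ ^ 2 := by rw [← hvar']; exact hvar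
  rw [hnum, ← sub_nonneg, div_sub' (ne_of_gt hSpos)]
  apply div_nonneg _ hSpos.le
  nlinarith [sq_nonneg ε]
end
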